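/- arXiv:1606.08649 — 11 statements merged into one kernel-verified Lean document; each statement's English description precedes it below -/
import Mathlib

section
/- If a monoid M is a Mal'tsev object of the category Mon of monoids, then M is a group, i.e. every element of M is invertible. -/
open CategoryTheory CategoryTheory.Limits

universe v u

variable {C : Type u} [Category.{v} C]

/-- A cospan `(r, s)` is jointly strongly epimorphic: whenever both `r` and `s`
factor through a monomorphism `m`, the monomorphism `m` is an isomorphism. -/
def JointlyStronglyEpi {X Y A : C} (r : X ⟶ A) (s : Y ⟶ A) : Prop :=
  ∀ ⦃M : C⦄ (m : M ⟶ A), Mono m →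
    (∃ r' : X ⟶ M, r' ≫ m = r) → (∃ s' : Y ⟶ M, s' ≫ m = s) → IsIso m

/-- A point `(f, s)` over `B` is strong: for every `g : X ⟶ B`, the second
projection of the pullback of `f` along `g` together with `s` is a jointly
strongly epimorphic pair. -/
def IsStrongPoint [HasPullbacks C] {A B : C} (f : A ⟶ B) (s : B ⟶ A) : Prop :=
  ∀ ⦃X : C⦄ (g : X ⟶ B), JointlyStronglyEpi (pullback.snd g f) s

/-- A point `(f, s)` over `B` is stably strong: every pullback of it along a
morphism `g : X ⟶ B` is a strong point. -/
def IsStablyStrongPoint [HasPullbacks C] {A B : C} (f : A ⟶ B) (s : B ⟶ A)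
    (hs : s ≫ f = 𝟙 B) : Prop :=
  ∀ ⦃X : C⦄ (g : X ⟶ B),
    IsStrongPoint (pullback.fst g f)
      (pullback.lift (𝟙 X) (g ≫ s) (by simp [hs]))

/-- An object `Y` is a Mal'tsev object: for every pullback of split
epimorphisms over `Y`, the two induced sections are jointly strongly
epimorphic. -/
def IsMaltsevObject [HasPullbacks C] (Y : C) : Prop :=
  ∀ ⦃A X : C⦄ (f : A ⟶ Y) (s : Y ⟶ A) (g : X ⟶ Y) (t : Y ⟶ X)
    (hs : s ≫ f = 𝟙 Y) (ht : t ≫ g = 𝟙 Y),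
    JointlyStronglyEpi
      (pullback.lift (𝟙 A) (f ≫ t) (by simp [ht]) : A ⟶ pullback f g)
      (pullback.lift (g ≫ s) (𝟙 X) (by simp [hs]) : X ⟶ pullback f g)

/-- An object `Y` is protomodular: every point over `Y` is stably strong. -/
def IsProtomodularObject [HasPullbacks C] (Y : C) : Prop :=
  ∀ ⦃A : C⦄ (f : A ⟶ Y) (s : Y ⟶ A) (hs : s ≫ f = 𝟙 Y), IsStablyStrongPoint f s hs

/-- `f` is a regular epimorphism. -/
def IsRegularEpi {X Y : C} (f : X ⟶ Y) : Prop := Nonempty (RegularEpi f)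

/-- A commutative square `f' ≫ β = α ≫ f` of regular epimorphisms is a regular
pushout if the comparison morphism into the pullback of `β` and `f` is a
regular epimorphism. -/
def IsRegularPushout [HasPullbacks C] {A' A B' B : C}
    (α : A' ⟶ A) (f' : A' ⟶ B') (f : A ⟶ B) (β : B' ⟶ B)
    (w : f' ≫ β = α ≫ f) : Prop :=
  _root_.IsRegularEpi α ∧ _root_.IsRegularEpi β ∧ _root_.IsRegularEpi f' ∧ _root_.IsRegularEpi f ∧
    _root_.IsRegularEpi (pullback.lift f' α w)

/-- `Y` is a strongly unital object. -/
def StronglyUnitalObject [HasPullbacks C] [HasBinaryProducts C] (Y : C) : Prop :=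
  IsStablyStrongPoint (prod.fst : Y ⨯ Y ⟶ Y) (prod.lift (𝟙 Y) (𝟙 Y)) (prod.lift_fst _ _)

/-- `Y` is a unital object. -/
def UnitalObject [HasPullbacks C] [HasBinaryProducts C] [HasZeroMorphisms C]
    (Y : C) : Prop :=
  IsStablyStrongPoint (prod.fst : Y ⨯ Y ⟶ Y) (prod.lift (𝟙 Y) 0) (prod.lift_fst _ _)

/-- `Y` is a subtractive object: for every split right punctual span
`(s, f, g, t)` over `Y`, the composite `ker(g) ≫ f` is a regular epimorphism. -/
def SubtractiveObject [HasZeroMorphisms C] [HasKernels C] (Y : C) : Prop :=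
  ∀ ⦃X Z : C⦄ (s : X ⟶ Z) (f : Z ⟶ X) (g : Z ⟶ Y) (t : Y ⟶ Z),
    s ≫ f = 𝟙 X → t ≫ g = 𝟙 Y → t ≫ f = 0 →
    _root_.IsRegularEpi (kernel.ι g ≫ f)

section MaltsevMonoidAux

/-- A bookkeeping monoid: `base c` records a plain element `c` of `M`, while
`hi n p q` records an element of "degree `n+1`" whose outer parts are `p` and `q`. -/
inductive KK (M : Type) : Type
  | base : M → KK M
  | hi : ℕ → M → M → KK M

namespace KK

variable {M : Type} [Monoid M]

instance : Mul (KK M) :=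
  ⟨fun a b =>
    match a, b with
    | .base c, .base c' => .base (c * c')
    | .base c, .hi n p q => .hi n (c * p) q
    | .hi n p q, .base c => .hi n p (q * c)
    | .hi n p q, .hi n' _ q' => .hi (n + n' + 1) p q'⟩

@[simp] theorem base_mul_base (c c' : M) : base c * base c' = base (c * c') := rfl
@[simp] theorem base_mul_hi (c : M) (n : ℕ) (p q : M) :
    base c * hi n p q = hi n (c * p) q := rfl
@[simp] theorem hi_mul_base (n : ℕ) (p q c : M) : hi n p q * base c = hi n p (q * c) := rfl
@[simp] theorem hi_mul_hi (n n' : ℕ) (p q p' q' : M) :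
    hi n p q * hi n' p' q' = hi (n + n' + 1) p q' := rfl

instance : One (KK M) := ⟨base 1⟩

@[simp] theorem one_def : (1 : KK M) = base 1 := rfl

instance : Monoid (KK M) where
  one_mul a := by rcases a with c | ⟨n, p, q⟩ <;> simp
  mul_one a := by rcases a with c | ⟨n, p, q⟩ <;> simp
  mul_assoc a b c := by
    rcases a with a | ⟨n₁, p₁, q₁⟩ <;> rcases b with b | ⟨n₂, p₂, q₂⟩ <;>
      rcases c with c | ⟨n₃, p₃, q₃⟩ <;>
      simp [mul_assoc, Nat.add_assoc, Nat.add_comm, Nat.add_left_comm]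

def zeta : KK M := hi 0 1 1

theorem zeta_pow_succ (k : ℕ) : (zeta : KK M) ^ (k + 1) = hi k 1 1 := by
  induction k with
  | zero => rw [pow_one]; rfl
  | succ k ih => rw [pow_succ, ih]; rfl

def baseHom : M →* KK M where
  toFun := base
  map_one' := rfl
  map_mul' _ _ := rfl

@[simp] theorem baseHom_apply (x : M) : (baseHom : M →* KK M) x = base x := rfl

/-- Compatibility between an element `x : M` and its bookkeeping value. -/
def Cpt (m : M) : M → KK M → Prop
  | x, .base c => x = c
  | x, .hi 0 p q => x = p * m * q
  | x, .hi (_ + 1) p q => ∃ u, x = p * m * u * m * q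

theorem Cpt.mul {m x y : M} {k l : KK M} (hx : Cpt m x k) (hy : Cpt m y l) :
    Cpt m (x * y) (k * l) := by
  rcases k with c | ⟨n, p, q⟩
  · rcases l with c' | ⟨n', p', q'⟩
    · show x * y = c * c'
      rw [(hx : x = c), (hy : y = c')]
    · rcases n' with _ | n'
      · show x * y = (c * p') * m * q'
        rw [(hx : x = c), (hy : y = p' * m * q')]; simp [mul_assoc]
      · obtain ⟨u, rfl⟩ := (hy : ∃ u, y = p' * m * u * m * q')
        exact ⟨u, by rw [(hx : x = c)]; simp [mul_assoc]⟩
  · rcases l with c' | ⟨n', p', q'⟩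
    · rcases n with _ | n
      · show x * y = p * m * (q * c')
        rw [(hx : x = p * m * q), (hy : y = c')]; simp [mul_assoc]
      · obtain ⟨u, rfl⟩ := (hx : ∃ u, x = p * m * u * m * q)
        exact ⟨u, by rw [(hy : y = c')]; simp [mul_assoc]⟩
    · rcases n with _ | n <;> rcases n' with _ | n'
      · exact ⟨q * p', by
          rw [(hx : x = p * m * q), (hy : y = p' * m * q')]; simp [mul_assoc]⟩
      · obtain ⟨u, rfl⟩ := (hy : ∃ u, y = p' * m * u * m * q')
        exact ⟨q * p' * m * u, by rw [(hx : x = p * m * q)]; simp [mul_assoc]⟩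
      · obtain ⟨u, rfl⟩ := (hx : ∃ u, x = p * m * u * m * q)
        exact ⟨u * m * q * p', by rw [(hy : y = p' * m * q')]; simp [mul_assoc]⟩
      · obtain ⟨u, rfl⟩ := (hx : ∃ u, x = p * m * u * m * q)
        obtain ⟨u', rfl⟩ := (hy : ∃ u', y = p' * m * u' * m * q')
        exact ⟨u * m * q * p' * m * u', by simp [mul_assoc]⟩

/-- The invariant relation on pairs of bookkeeping values. -/
def Rel (m : M) : KK M → KK M → Prop
  | .base c, .base c' => c' = c
  | .base c, .hi 0 p q => c = p * m * q
  | .base c, .hi (_ + 1) p q => ∃ u, c = p * m * u * m * q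
  | .hi 0 p q, .base c => c = p * m * q
  | .hi (_ + 1) p q, .base c => ∃ u, c = p * m * u * m * q
  | .hi 0 p q, .hi 0 r t =>
      (∃ L, r = p * m * L ∧ q = L * m * t) ∨ (∃ L, p = r * m * L ∧ t = L * m * q)
  | .hi 0 _ _, .hi (_ + 1) _ _ => True
  | .hi (_ + 1) _ _, .hi _ _ _ => True

theorem Rel.mul {m : M} {k₁ l₁ k₂ l₂ : KK M} (h₁ : Rel m k₁ l₁) (h₂ : Rel m k₂ l₂) :
    Rel m (k₁ * k₂) (l₁ * l₂) := by
  rcases k₁ with a | ⟨n₁, p₁, q₁⟩ <;> rcases l₁ with b | ⟨ν₁, r₁, t₁⟩ <;>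
    rcases k₂ with c | ⟨n₂, p₂, q₂⟩ <;> rcases l₂ with d | ⟨ν₂, r₂, t₂⟩
  -- (B,B,B,B)
  · show b * d = a * c
    rw [(h₁ : b = a), (h₂ : d = c)]
  -- (B,B,B,H)
  · rcases ν₂ with _ | ν₂
    · show a * c = (b * r₂) * m * t₂
      rw [(h₁ : b = a), (h₂ : c = r₂ * m * t₂)]; simp [mul_assoc]
    · obtain ⟨u, rfl⟩ := (h₂ : ∃ u, c = r₂ * m * u * m * t₂)
      exact ⟨u, by rw [(h₁ : b = a)]; simp [mul_assoc]⟩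
  -- (B,B,H,B)
  · rcases n₂ with _ | n₂
    · show b * d = (a * p₂) * m * q₂
      rw [(h₁ : b = a), (h₂ : d = p₂ * m * q₂)]; simp [mul_assoc]
    · obtain ⟨u, rfl⟩ := (h₂ : ∃ u, d = p₂ * m * u * m * q₂)
      exact ⟨u, by rw [(h₁ : b = a)]; simp [mul_assoc]⟩
  -- (B,B,H,H)
  · rcases n₂ with _ | n₂ <;> rcases ν₂ with _ | ν₂
    · rcases (h₂ : _ ∨ _) with ⟨L, hL1, hL2⟩ | ⟨L, hL1, hL2⟩
      · exact Or.inl ⟨L, by rw [(h₁ : b = a), hL1]; simp [mul_assoc], hL2⟩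
      · exact Or.inr ⟨L, by rw [(h₁ : b = a), hL1]; simp [mul_assoc], hL2⟩
    · exact trivial
    · exact trivial
    · exact trivial
  -- (B,H,B,B)
  · rcases ν₁ with _ | ν₁
    · show a * c = r₁ * m * (t₁ * d)
      rw [(h₁ : a = r₁ * m * t₁), (h₂ : d = c)]; simp [mul_assoc]
    · obtain ⟨u, rfl⟩ := (h₁ : ∃ u, a = r₁ * m * u * m * t₁)
      exact ⟨u, by rw [(h₂ : d = c)]; simp [mul_assoc]⟩
  -- (B,H,B,H)
  · rcases ν₁ with _ | ν₁ <;> rcases ν₂ with _ | ν₂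
    · exact ⟨t₁ * r₂, by
        rw [(h₁ : a = r₁ * m * t₁), (h₂ : c = r₂ * m * t₂)]; simp [mul_assoc]⟩
    · obtain ⟨u, rfl⟩ := (h₂ : ∃ u, c = r₂ * m * u * m * t₂)
      exact ⟨t₁ * r₂ * m * u, by rw [(h₁ : a = r₁ * m * t₁)]; simp [mul_assoc]⟩
    · obtain ⟨u, rfl⟩ := (h₁ : ∃ u, a = r₁ * m * u * m * t₁)
      exact ⟨u * m * t₁ * r₂, by rw [(h₂ : c = r₂ * m * t₂)]; simp [mul_assoc]⟩
    · obtain ⟨u, rfl⟩ := (h₁ : ∃ u, a = r₁ * m * u * m * t₁)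
      obtain ⟨u', rfl⟩ := (h₂ : ∃ u', c = r₂ * m * u' * m * t₂)
      exact ⟨u * m * t₁ * r₂ * m * u', by simp [mul_assoc]⟩
  -- (B,H,H,B)
  · rcases n₂ with _ | n₂ <;> rcases ν₁ with _ | ν₁
    · exact Or.inr ⟨t₁ * p₂,
        by rw [(h₁ : a = r₁ * m * t₁)]; simp [mul_assoc],
        by rw [(h₂ : d = p₂ * m * q₂)]; simp [mul_assoc]⟩
    · exact trivial
    · exact trivial
    · exact trivial
  -- (B,H,H,H)
  · rcases n₂ with _ | n₂ <;> exact trivial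
  -- (H,B,B,B)
  · rcases n₁ with _ | n₁
    · show b * d = p₁ * m * (q₁ * c)
      rw [(h₁ : b = p₁ * m * q₁), (h₂ : d = c)]; simp [mul_assoc]
    · obtain ⟨u, rfl⟩ := (h₁ : ∃ u, b = p₁ * m * u * m * q₁)
      exact ⟨u, by rw [(h₂ : d = c)]; simp [mul_assoc]⟩
  -- (H,B,B,H)
  · rcases n₁ with _ | n₁ <;> rcases ν₂ with _ | ν₂
    · exact Or.inl ⟨q₁ * r₂,
        by rw [(h₁ : b = p₁ * m * q₁)]; simp [mul_assoc],
        by rw [(h₂ : c = r₂ * m * t₂)]; simp [mul_assoc]⟩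
    · exact trivial
    · exact trivial
    · exact trivial
  -- (H,B,H,B)
  · rcases n₁ with _ | n₁ <;> rcases n₂ with _ | n₂
    · exact ⟨q₁ * p₂, by
        rw [(h₁ : b = p₁ * m * q₁), (h₂ : d = p₂ * m * q₂)]; simp [mul_assoc]⟩
    · obtain ⟨u, rfl⟩ := (h₂ : ∃ u, d = p₂ * m * u * m * q₂)
      exact ⟨q₁ * p₂ * m * u, by rw [(h₁ : b = p₁ * m * q₁)]; simp [mul_assoc]⟩
    · obtain ⟨u, rfl⟩ := (h₁ : ∃ u, b = p₁ * m * u * m * q₁)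
      exact ⟨u * m * q₁ * p₂, by rw [(h₂ : d = p₂ * m * q₂)]; simp [mul_assoc]⟩
    · obtain ⟨u, rfl⟩ := (h₁ : ∃ u, b = p₁ * m * u * m * q₁)
      obtain ⟨u', rfl⟩ := (h₂ : ∃ u', d = p₂ * m * u' * m * q₂)
      exact ⟨u * m * q₁ * p₂ * m * u', by simp [mul_assoc]⟩
  -- (H,B,H,H)
  · exact trivial
  -- (H,H,B,B)
  · rcases n₁ with _ | n₁ <;> rcases ν₁ with _ | ν₁
    · rcases (h₁ : _ ∨ _) with ⟨L, hL1, hL2⟩ | ⟨L, hL1, hL2⟩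
      · exact Or.inl ⟨L, hL1, by rw [hL2, (h₂ : d = c)]; simp [mul_assoc]⟩
      · exact Or.inr ⟨L, hL1, by rw [hL2, (h₂ : d = c)]; simp [mul_assoc]⟩
    · exact trivial
    · exact trivial
    · exact trivial
  -- (H,H,B,H)
  · rcases n₁ with _ | n₁ <;> exact trivial
  -- (H,H,H,B)
  · exact trivial
  -- (H,H,H,H)
  · exact trivial

theorem Rel.one {m : M} : Rel m (1 : KK M) 1 := rfl

/-- The invariant submonoid of `KK M × KK M`. -/
def relSubmonoid (m : M) : Submonoid (KK M × KK M) where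
  carrier := {k | Rel m k.1 k.2}
  one_mem' := Rel.one (m := m)
  mul_mem' := fun ha hb => Rel.mul ha hb

theorem rel_left {m x : M} {k : KK M} (h : Cpt m x k) : Rel m k (base x) := by
  rcases k with c | ⟨n, p, q⟩
  · exact (h : x = c) ▸ rfl
  · rcases n with _ | n
    · exact (h : x = p * m * q)
    · exact (h : ∃ u, x = p * m * u * m * q)

theorem rel_right {m x : M} {k : KK M} (h : Cpt m x k) : Rel m (base x) k := by
  rcases k with c | ⟨n, p, q⟩
  · exact ((h : x = c) ▸ rfl : Rel m (base x) (base c))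
  · rcases n with _ | n
    · exact (h : x = p * m * q)
    · exact (h : ∃ u, x = p * m * u * m * q)

end KK

/-- The coproduct `M ∗ ℕ` in monoids. -/
abbrev AAM (M : Type) [Monoid M] : Type := Monoid.Coprod M (Multiplicative ℕ)

variable {M : Type} [Monoid M]

/-- The split epimorphism `M ∗ ℕ → M` restricting to the identity on `M` and sending the
generator of `ℕ` to `m`. -/
def ffHom (m : M) : AAM M →* M := Monoid.Coprod.lift (MonoidHom.id M) (powersHom M m)

/-- The bookkeeping homomorphism `M ∗ ℕ → KK M`. -/
def phiHom : AAM M →* KK M := Monoid.Coprod.lift KK.baseHom (powersHom (KK M) KK.zeta)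

/-- The generator of the `ℕ` factor. -/
def zGen : AAM M := Monoid.Coprod.inr (Multiplicative.ofAdd 1)

@[simp] theorem ff_inl (m x : M) : ffHom m (Monoid.Coprod.inl x) = x := by
  simp [ffHom]

@[simp] theorem phi_inl (x : M) : phiHom (M := M) (Monoid.Coprod.inl x) = KK.base x := by
  simp [phiHom]

theorem phi_zGen : phiHom (M := M) zGen = KK.zeta := by
  simp [phiHom, zGen, powersHom_apply]

theorem cpt_all (m : M) : ∀ w : AAM M, KK.Cpt m (ffHom m w) (phiHom w) := by
  intro w
  induction w using Monoid.Coprod.induction_on with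
  | inl x => rw [ff_inl, phi_inl]; exact rfl
  | inr n =>
    have h1 : ffHom m (Monoid.Coprod.inr n) = m ^ n.toAdd := by
      simp [ffHom, powersHom_apply]
    have h2 : phiHom (M := M) (Monoid.Coprod.inr n) = KK.zeta ^ n.toAdd := by
      simp [phiHom, powersHom_apply]
    rw [h1, h2]
    rcases hk : n.toAdd with _ | k
    · rw [pow_zero, pow_zero]; exact rfl
    · rw [KK.zeta_pow_succ]
      rcases k with _ | k
      · show m ^ 1 = 1 * m * 1
        simp
      · exact ⟨m ^ k, by rw [pow_succ, pow_succ']; simp [mul_assoc]⟩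
  | mul x y hx hy => rw [map_mul, map_mul]; exact hx.mul hy

end MaltsevMonoidAux


/-- If a monoid `M` is a Mal'tsev object of `Mon`, then `M` is a group. -/
theorem statement1 (M : Type) [Monoid M]
    (h : IsMaltsevObject (MonCat.of M)) : ∀ m : M, IsUnit m := by
  intro m
  let A : MonCat := MonCat.of (AAM M)
  let f : A ⟶ MonCat.of M := MonCat.ofHom (ffHom m)
  let s : MonCat.of M ⟶ A := MonCat.ofHom Monoid.Coprod.inl
  have hs : s ≫ f = 𝟙 (MonCat.of M) := by
    ext x
    show ffHom m (Monoid.Coprod.inl x) = x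
    simp
  have hJ := h f s f s hs hs
  -- the explicit pullback
  let P0 : Submonoid (AAM M × AAM M) :=
    MonoidHom.eqLocusM ((ffHom m).comp (MonoidHom.fst _ _)) ((ffHom m).comp (MonoidHom.snd _ _))
  let p1 : ↥P0 →* AAM M := (MonoidHom.fst _ _).comp P0.subtype
  let p2 : ↥P0 →* AAM M := (MonoidHom.snd _ _).comp P0.subtype
  have wcond : MonCat.ofHom p1 ≫ f = MonCat.ofHom p2 ≫ f := by
    ext x
    exact x.2
  let φ : MonCat.of ↥P0 ⟶ pullback f f := pullback.lift (MonCat.ofHom p1) (MonCat.ofHom p2) wcond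
  let fst' : ↥(pullback f f) →* AAM M := (pullback.fst f f).hom
  let snd' : ↥(pullback f f) →* AAM M := (pullback.snd f f).hom
  have hcond : ∀ x : ↥(pullback f f), (ffHom m).comp (MonoidHom.fst _ _) (fst' x, snd' x)
      = (ffHom m).comp (MonoidHom.snd _ _) (fst' x, snd' x) := by
    intro x
    show ffHom m (fst' x) = ffHom m (snd' x)
    have hc := pullback.condition (f := f) (g := f)
    exact congrArg (fun g => MonCat.Hom.hom g x) hc
  let ψm : ↥(pullback f f) →* ↥P0 :=
    MonoidHom.codRestrict (MonoidHom.prod fst' snd') P0 hcond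
  let ψ : pullback f f ⟶ MonCat.of ↥P0 := MonCat.ofHom ψm
  have hψφ : ψ ≫ φ = 𝟙 (pullback f f) := by
    apply pullback.hom_ext
    · rw [Category.assoc, Category.id_comp]
      show ψ ≫ φ ≫ pullback.fst f f = pullback.fst f f
      rw [show φ ≫ pullback.fst f f = MonCat.ofHom p1 from pullback.lift_fst _ _ _]
      ext x
      rfl
    · rw [Category.assoc, Category.id_comp]
      show ψ ≫ φ ≫ pullback.snd f f = pullback.snd f f
      rw [show φ ≫ pullback.snd f f = MonCat.ofHom p2 from pullback.lift_snd _ _ _]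
      ext x
      rfl
  have hφψ : φ ≫ ψ = 𝟙 (MonCat.of ↥P0) := by
    ext x
    · have h1 : φ ≫ pullback.fst f f = MonCat.ofHom p1 := pullback.lift_fst _ _ _
      exact congrArg (fun g => MonCat.Hom.hom g x) h1
    · have h2 : φ ≫ pullback.snd f f = MonCat.ofHom p2 := pullback.lift_snd _ _ _
      exact congrArg (fun g => MonCat.Hom.hom g x) h2
  haveI : IsIso φ := ⟨ψ, hφψ, hψφ⟩
  -- the invariant submonoid
  let Θ : ↥P0 →* KK M × KK M := MonoidHom.prod (phiHom.comp p1) (phiHom.comp p2)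
  let N0 : Submonoid ↥P0 := (KK.relSubmonoid m).comap Θ
  let inc : MonCat.of ↥N0 ⟶ MonCat.of ↥P0 := MonCat.ofHom N0.subtype
  haveI : Mono inc := ConcreteCategory.mono_of_injective _ Subtype.val_injective
  haveI : Mono φ := by infer_instance
  let mm : MonCat.of ↥N0 ⟶ pullback f f := inc ≫ φ
  haveI : Mono mm := mono_comp inc φ
  have hmmfst : mm ≫ pullback.fst f f = inc ≫ MonCat.ofHom p1 := by
    show (inc ≫ φ) ≫ _ = _
    rw [Category.assoc, show φ ≫ pullback.fst f f = MonCat.ofHom p1 from pullback.lift_fst _ _ _]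
  have hmmsnd : mm ≫ pullback.snd f f = inc ≫ MonCat.ofHom p2 := by
    show (inc ≫ φ) ≫ _ = _
    rw [Category.assoc, show φ ≫ pullback.snd f f = MonCat.ofHom p2 from pullback.lift_snd _ _ _]
  -- first factorization
  let j1 : AAM M →* ↥P0 :=
    MonoidHom.codRestrict ((MonoidHom.id (AAM M)).prod
      ((Monoid.Coprod.inl).comp (ffHom m))) P0 (fun w => (ff_inl m _).symm)
  let r1 : A ⟶ MonCat.of ↥N0 := MonCat.ofHom (MonoidHom.codRestrict j1 N0 (fun w => by
    show KK.Rel m (phiHom w) (phiHom (Monoid.Coprod.inl (ffHom m w)))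
    rw [phi_inl]
    exact KK.rel_left (cpt_all m w)))
  have hfac1 : r1 ≫ mm = (pullback.lift (𝟙 A) (f ≫ s) (by simp [hs]) : A ⟶ pullback f f) := by
    apply pullback.hom_ext
    · simp only [Category.assoc]
      rw [hmmfst, pullback.lift_fst]
      ext w
      all_goals rfl
    · simp only [Category.assoc]
      rw [hmmsnd, pullback.lift_snd]
      ext w
      all_goals rfl
  -- second factorization
  let j2 : AAM M →* ↥P0 :=
    MonoidHom.codRestrict (((Monoid.Coprod.inl).comp (ffHom m)).prod
      (MonoidHom.id (AAM M))) P0 (fun w => ff_inl m _)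
  let r2 : A ⟶ MonCat.of ↥N0 := MonCat.ofHom (MonoidHom.codRestrict j2 N0 (fun w => by
    show KK.Rel m (phiHom (Monoid.Coprod.inl (ffHom m w))) (phiHom w)
    rw [phi_inl]
    exact KK.rel_right (cpt_all m w)))
  have hfac2 : r2 ≫ mm = (pullback.lift (f ≫ s) (𝟙 A) (by simp [hs]) : A ⟶ pullback f f) := by
    apply pullback.hom_ext
    · simp only [Category.assoc]
      rw [hmmfst, pullback.lift_fst]
      ext w
      all_goals rfl
    · simp only [Category.assoc]
      rw [hmmsnd, pullback.lift_snd]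
      ext w
      all_goals rfl
  haveI hiso : IsIso mm := hJ mm ‹Mono mm› ⟨r1, hfac1⟩ ⟨r2, hfac2⟩
  -- extraction
  let ζ : ↥P0 := ⟨(zGen, zGen), rfl⟩
  obtain ⟨n, hn⟩ := (ConcreteCategory.bijective_of_isIso mm).2 (φ ζ)
  have hinj := (ConcreteCategory.bijective_of_isIso φ).1
  have hz : (N0.subtype n : ↥P0) = ζ := by
    apply hinj
    exact hn
  have hmem : ζ ∈ N0 := hz ▸ n.2
  have hrel : KK.Rel m (phiHom (M := M) zGen) (phiHom (M := M) zGen) := hmem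
  rw [phi_zGen] at hrel
  rcases hrel with h' | h' <;> obtain ⟨L, h1, h2⟩ := h' <;>
    exact ⟨⟨m, L, by simpa using h1.symm, by simpa using h2.symm⟩, rfl⟩
end

section
/- In a finitely complete category, strong points are closed under quotients: given points (f : A → B, s : B → A) and (f' : A' → B', s' : B' → A') together with regular epimorphisms α : A → A' and β : B → B' such that f' ∘ α = β ∘ f and α ∘ s = s' ∘ β, if (f, s) is a strong point then (f', s') is a strong point. -/
open CategoryTheory CategoryTheory.Limits

universe v u

variable {C : Type u} [Category.{v} C]

/-- In a finitely complete category, strong points are closed under quotients. -/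
theorem statement5 [HasFiniteLimits C] {A B A' B' : C}
    (f : A ⟶ B) (s : B ⟶ A) (hs : s ≫ f = 𝟙 B)
    (f' : A' ⟶ B') (s' : B' ⟶ A') (hs' : s' ≫ f' = 𝟙 B')
    (α : A ⟶ A') (β : B ⟶ B') (hα : _root_.IsRegularEpi α) (hβ : _root_.IsRegularEpi β)
    (w1 : α ≫ f' = f ≫ β) (w2 : s ≫ α = β ≫ s')
    (h : IsStrongPoint f s) :
    IsStrongPoint f' s' := by
  intro X g M m hm hr ht
  obtain ⟨r', hr'⟩ := hr
  obtain ⟨t', ht'⟩ := ht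
  haveI := hm
  -- pull back m along α
  haveI hmono : Mono (pullback.fst α m) := inferInstance
  -- comparison morphism into pullback g f'
  have hφ : (pullback.fst (pullback.snd g β) f ≫ pullback.fst g β) ≫ g =
      (pullback.snd (pullback.snd g β) f ≫ α) ≫ f' := by
    rw [Category.assoc, pullback.condition (f := g) (g := β), ← Category.assoc,
      pullback.condition (f := pullback.snd g β) (g := f), Category.assoc,
      Category.assoc, w1]
  let φ : pullback (pullback.snd g β) f ⟶ pullback g f' :=
    pullback.lift _ _ hφ
  have hψ : pullback.snd (pullback.snd g β) f ≫ α = (φ ≫ r') ≫ m := by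
    rw [Category.assoc, hr']
    exact (pullback.lift_snd _ _ _).symm
  have key := h (pullback.snd g β) (pullback.fst α m) hmono
    ⟨pullback.lift _ _ hψ, pullback.lift_fst _ _ _⟩
    ⟨pullback.lift s (β ≫ t') (by rw [w2, Category.assoc, ht']), pullback.lift_fst _ _ _⟩
  haveI := key
  have hu : (inv (pullback.fst α m) ≫ pullback.snd α m) ≫ m = α := by
    rw [Category.assoc, ← pullback.condition, IsIso.inv_hom_id_assoc]
  haveI : StrongEpi α := by haveI := isRegularEpi_of_regularEpi hα.some; infer_instance
  haveI : StrongEpi m := by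
    rw [← hu] at this
    exact strongEpi_of_strongEpi (inv (pullback.fst α m) ≫ pullback.snd α m) m
  exact isIso_of_mono_of_strongEpi m
end

section
/- In a regular category, every double split epimorphism (f' : D → C, s' : C → D), (g' : D → A, t' : A → D), (f : A → B, s : B → A), (g : C → B, t : B → C) in which the point (g, t) is stably strong is a regular pushout; in particular the comparison morphism ⟨g', f'⟩ : D → A ×_B C into the pullback of f and g is a regular epimorphism. -/
open CategoryTheory CategoryTheory.Limits

universe v u

variable {C : Type u} [Category.{v} C]

section Aux

theorem isRegularEpi_of_section {X Y : C} (f : X ⟶ Y) (s : Y ⟶ X)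
    (hs : s ≫ f = 𝟙 Y) : _root_.IsRegularEpi f := by
  haveI : IsSplitEpi f := ⟨⟨⟨s, hs⟩⟩⟩
  exact ⟨RegularEpi.ofSplitEpi f⟩

theorem isRegularEpi_comp_isIso {X Y Z : C} (q : X ⟶ Y) (m : Y ⟶ Z)
    (hq : RegularEpi q) [IsIso m] : _root_.IsRegularEpi (q ≫ m) := by
  refine ⟨⟨hq.W, hq.left, hq.right,
    by rw [hq.w_assoc], ?_⟩⟩
  refine Cofork.IsColimit.mk _ ?_ ?_ ?_
  · exact fun sk => inv m ≫
      (Cofork.IsColimit.desc' (hq.isColimit) sk.π sk.condition).1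
  · intro sk
    have h2 := (Cofork.IsColimit.desc' (hq.isColimit) sk.π sk.condition).2
    simp only [Cofork.π_ofπ] at h2 ⊢
    rw [Category.assoc, IsIso.hom_inv_id_assoc]
    exact h2
  · intro sk n hn
    have h2 := (Cofork.IsColimit.desc' (hq.isColimit) sk.π sk.condition).2
    simp only [Cofork.π_ofπ] at h2 hn
    rw [Category.assoc] at hn
    have h3 : q ≫ m ≫ n
        = q ≫ (Cofork.IsColimit.desc' (hq.isColimit) sk.π sk.condition).1 := by
      rw [hn, h2]
    haveI := RegularEpi.epi q hq
    have h4 := (cancel_epi q).1 h3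
    rw [← h4, IsIso.inv_hom_id_assoc]

theorem isRegularEpi_of_jse [HasFiniteLimits C]
    (hcoeq : ∀ {X Y : C} (f : X ⟶ Y),
      HasCoequalizer (pullback.fst f f) (pullback.snd f f))
    (hstab : ∀ {X Y Z : C} (f : X ⟶ Z) (g : Y ⟶ Z),
      _root_.IsRegularEpi f → _root_.IsRegularEpi (pullback.snd f g))
    {X Y Z W : C} {r : X ⟶ W} {σ : Y ⟶ W} (hj : JointlyStronglyEpi r σ)
    (d : Z ⟶ W) (r' : X ⟶ Z) (hr : r' ≫ d = r) (σ' : Y ⟶ Z) (hσ : σ' ≫ d = σ) :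
    _root_.IsRegularEpi d := by
  haveI := hcoeq d
  set q : Z ⟶ coequalizer (pullback.fst d d) (pullback.snd d d) :=
    coequalizer.π (pullback.fst d d) (pullback.snd d d) with hqdef
  set m := coequalizer.desc d pullback.condition with hmdef
  have hqd : q ≫ m = d := coequalizer.π_desc _ _
  have hmono : Mono m := by
    constructor
    intro T u v huv
    have h1 : _root_.IsRegularEpi (pullback.snd q u) := hstab q u ⟨coequalizerRegular _ _⟩
    have h2 : _root_.IsRegularEpi (pullback.snd q (pullback.snd q u ≫ v)) :=
      hstab _ _ ⟨coequalizerRegular _ _⟩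
    haveI := RegularEpi.epi _ h1.some
    haveI := RegularEpi.epi _ h2.some
    set r₂ := pullback.snd q (pullback.snd q u ≫ v) with hr2
    set a := r₂ ≫ pullback.fst q u with hadef
    set b := pullback.fst q (pullback.snd q u ≫ v) with hbdef
    have haq : a ≫ q = r₂ ≫ pullback.snd q u ≫ u := by
      rw [hadef, Category.assoc, pullback.condition]
    have hbq : b ≫ q = r₂ ≫ pullback.snd q u ≫ v := by
      have hc := pullback.condition (f := q) (g := pullback.snd q u ≫ v)
      rw [hbdef, hc, hr2]
    have hab : a ≫ d = b ≫ d := by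
      have e : a ≫ (q ≫ m) = b ≫ (q ≫ m) := by
        rw [← Category.assoc, ← Category.assoc, haq, hbq]
        simp only [Category.assoc]
        rw [huv]
      rwa [hqd] at e
    have hJ1 : a ≫ q = b ≫ q := by
      have hcond : pullback.fst d d ≫ q = pullback.snd d d ≫ q := coequalizer.condition _ _
      have e1 : pullback.lift a b hab ≫ pullback.fst d d ≫ q
          = pullback.lift a b hab ≫ pullback.snd d d ≫ q := by rw [hcond]
      rwa [← Category.assoc, pullback.lift_fst, ← Category.assoc, pullback.lift_snd] at e1
    have e2 : r₂ ≫ pullback.snd q u ≫ u = r₂ ≫ pullback.snd q u ≫ v := by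
      rw [← haq, ← hbq, hJ1]
    have e3 := (cancel_epi r₂).1 e2
    exact (cancel_epi (pullback.snd q u)).1 e3
  have hiso : IsIso m :=
    hj m hmono ⟨r' ≫ q, by rw [Category.assoc, hqd, hr]⟩
      ⟨σ' ≫ q, by rw [Category.assoc, hqd, hσ]⟩
  rw [← hqd]
  exact isRegularEpi_comp_isIso q m (coequalizerRegular _ _)

end Aux

/-- In a regular category, every double split epimorphism in which the point
`(g, t)` is stably strong is a regular pushout. -/
theorem statement7 [HasFiniteLimits C]
    (hcoeq : ∀ {X Y : C} (f : X ⟶ Y),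
      HasCoequalizer (pullback.fst f f) (pullback.snd f f))
    (hstab : ∀ {X Y Z : C} (f : X ⟶ Z) (g : Y ⟶ Z),
      _root_.IsRegularEpi f → _root_.IsRegularEpi (pullback.snd f g))
    {D A B Cc : C}
    (f' : D ⟶ Cc) (s' : Cc ⟶ D) (hs' : s' ≫ f' = 𝟙 Cc)
    (g' : D ⟶ A) (t' : A ⟶ D) (ht' : t' ≫ g' = 𝟙 A)
    (f : A ⟶ B) (s : B ⟶ A) (hs : s ≫ f = 𝟙 B)
    (g : Cc ⟶ B) (t : B ⟶ Cc) (ht : t ≫ g = 𝟙 B)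
    (c1 : f' ≫ g = g' ≫ f) (c2 : s' ≫ g' = g ≫ s)
    (c3 : t' ≫ f' = f ≫ t) (c4 : t ≫ s' = s ≫ t')
    (hgt : IsStablyStrongPoint g t ht) :
    IsRegularPushout f' g' g f c1.symm := by
  refine ⟨isRegularEpi_of_section f' s' hs', isRegularEpi_of_section f s hs,
    isRegularEpi_of_section g' t' ht', isRegularEpi_of_section g t ht, ?_⟩
  -- the comparison morphism d : D ⟶ pullback f g
  set d : D ⟶ pullback f g := pullback.lift g' f' c1.symm with hd
  -- the strong point (π₁ : pullback f g ⟶ A, σ) obtained by pulling back (g, t) along f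
  have hsp := hgt f
  have hjse := hsp s
  -- σ factors through d via t'
  have hσfac : t' ≫ d = pullback.lift (𝟙 A) (f ≫ t) (by simp [ht]) := by
    apply pullback.hom_ext
    · simp [hd, ht', pullback.lift_fst]
    · simp [hd, c3, pullback.lift_snd]
  -- pullback.snd s π₁ factors through d via π₂ ≫ s'
  have hrfac : (pullback.snd s (pullback.fst f g) ≫ pullback.snd f g ≫ s') ≫ d
      = pullback.snd s (pullback.fst f g) := by
    apply pullback.hom_ext
    · have hc2 : s' ≫ g' = g ≫ s := c2
      have hPcond : pullback.fst f g ≫ f = pullback.snd f g ≫ g := pullback.condition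
      have hcond' : pullback.fst s (pullback.fst f g) ≫ s
          = pullback.snd s (pullback.fst f g) ≫ pullback.fst f g := pullback.condition
      simp only [hd, Category.assoc, pullback.lift_fst, hc2]
      rw [← Category.assoc (pullback.snd f g) g s, ← hPcond]
      simp only [Category.assoc]
      rw [← Category.assoc, ← hcond', Category.assoc, ← Category.assoc s f s, hs,
        Category.id_comp]
    · simp [hd, hs', pullback.lift_snd]
  exact isRegularEpi_of_jse hcoeq hstab hjse d
    (pullback.snd s (pullback.fst f g) ≫ pullback.snd f g ≫ s') hrfac t' hσfac
end

section
/- In a regular category, let g : A' → A, h : B' → B, f' : A' → B' and f : A → B be regular epimorphisms with f ∘ g = h ∘ f', and let f'' : Eq(g) → Eq(h) be the induced morphism between the kernel pairs of g and h, commuting with the kernel-pair projections. If one of the two squares f' ∘ π_i = π_i ∘ f'' (i = 1, 2) formed by f'', f' and the kernel-pair projections is a regular pushout (so in particular f'' is a regular epimorphism), then the square f ∘ g = h ∘ f' is a regular pushout. -/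
open CategoryTheory CategoryTheory.Limits

universe v u

variable {C : Type u} [Category.{v} C]

theorem IsRegularEpi.strongEpi {X Y : C} {f : X ⟶ Y} (h : _root_.IsRegularEpi f) : StrongEpi f := by
  obtain ⟨h⟩ := h
  haveI := isRegularEpi_of_regularEpi h; infer_instance

section BournAux

variable [HasFiniteLimits C]

theorem aux_mono
    (hstab : ∀ {X Y Z : C} (f : X ⟶ Z) (g : Y ⟶ Z),
      _root_.IsRegularEpi f → _root_.IsRegularEpi (pullback.snd f g))
    {X I Y : C} (e : X ⟶ I) (m : I ⟶ Y) (hre : _root_.IsRegularEpi e)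
    (hker : ∀ {T : C} (x y : T ⟶ X), x ≫ e ≫ m = y ≫ e ≫ m → x ≫ e = y ≫ e) :
    Mono m := by
  constructor
  intro T u v huv
  obtain ⟨re1⟩ := hstab e u hre
  obtain ⟨re2⟩ := hstab e (pullback.snd e u ≫ v) hre
  haveI := RegularEpi.epi _ re1; haveI := RegularEpi.epi _ re2
  have hx' : pullback.fst e u ≫ e = pullback.snd e u ≫ u := pullback.condition
  have hy' : pullback.fst e (pullback.snd e u ≫ v) ≫ e
      = pullback.snd e (pullback.snd e u ≫ v) ≫ pullback.snd e u ≫ v := pullback.condition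
  have hxy : (pullback.snd e (pullback.snd e u ≫ v) ≫ pullback.fst e u) ≫ e ≫ m
      = pullback.fst e (pullback.snd e u ≫ v) ≫ e ≫ m := by
    calc (pullback.snd e (pullback.snd e u ≫ v) ≫ pullback.fst e u) ≫ e ≫ m
        = pullback.snd e (pullback.snd e u ≫ v) ≫ (pullback.fst e u ≫ e) ≫ m := by
          simp only [Category.assoc]
      _ = pullback.snd e (pullback.snd e u ≫ v) ≫ (pullback.snd e u ≫ u) ≫ m := by rw [hx']
      _ = pullback.snd e (pullback.snd e u ≫ v) ≫ pullback.snd e u ≫ u ≫ m := by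
          simp only [Category.assoc]
      _ = pullback.snd e (pullback.snd e u ≫ v) ≫ pullback.snd e u ≫ v ≫ m := by rw [huv]
      _ = (pullback.fst e (pullback.snd e u ≫ v) ≫ e) ≫ m := by
          rw [hy']; simp only [Category.assoc]
      _ = pullback.fst e (pullback.snd e u ≫ v) ≫ e ≫ m := by simp only [Category.assoc]
  have key := hker _ _ hxy
  have huv' : (pullback.snd e (pullback.snd e u ≫ v) ≫ pullback.snd e u) ≫ u
      = (pullback.snd e (pullback.snd e u ≫ v) ≫ pullback.snd e u) ≫ v := by
    calc (pullback.snd e (pullback.snd e u ≫ v) ≫ pullback.snd e u) ≫ u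
        = pullback.snd e (pullback.snd e u ≫ v) ≫ (pullback.fst e u ≫ e) := by
          rw [hx']; simp only [Category.assoc]
      _ = (pullback.snd e (pullback.snd e u ≫ v) ≫ pullback.fst e u) ≫ e := by
          simp only [Category.assoc]
      _ = pullback.fst e (pullback.snd e u ≫ v) ≫ e := key
      _ = (pullback.snd e (pullback.snd e u ≫ v) ≫ pullback.snd e u) ≫ v := by
          rw [hy']; simp only [Category.assoc]
  rwa [cancel_epi] at huv'

theorem aux_strongEpi_isRegularEpi
    (hcoeq : ∀ {X Y : C} (f : X ⟶ Y),
      HasCoequalizer (pullback.fst f f) (pullback.snd f f))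
    (hstab : ∀ {X Y Z : C} (f : X ⟶ Z) (g : Y ⟶ Z),
      _root_.IsRegularEpi f → _root_.IsRegularEpi (pullback.snd f g))
    {X Y : C} (f : X ⟶ Y) (hf : StrongEpi f) : _root_.IsRegularEpi f := by
  haveI := hcoeq f
  have hw : pullback.fst f f ≫ f = pullback.snd f f ≫ f := pullback.condition
  have hem : coequalizer.π (pullback.fst f f) (pullback.snd f f) ≫ coequalizer.desc f hw = f :=
    coequalizer.π_desc _ _
  haveI hmono : Mono (coequalizer.desc f hw) := by
    apply aux_mono hstab (coequalizer.π _ _) _ ⟨coequalizerRegular _ _⟩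
    intro T x y hxy
    rw [hem] at hxy
    have hc := coequalizer.condition (pullback.fst f f) (pullback.snd f f)
    calc x ≫ coequalizer.π (pullback.fst f f) (pullback.snd f f)
        = (pullback.lift x y hxy ≫ pullback.fst f f) ≫ coequalizer.π _ _ := by
          rw [pullback.lift_fst]
      _ = (pullback.lift x y hxy ≫ pullback.snd f f) ≫ coequalizer.π _ _ := by
          rw [Category.assoc, Category.assoc, hc]
      _ = y ≫ coequalizer.π (pullback.fst f f) (pullback.snd f f) := by
          rw [pullback.lift_snd]
  haveI hse : StrongEpi (coequalizer.π (pullback.fst f f) (pullback.snd f f) ≫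
      coequalizer.desc f hw) := by rw [hem]; exact hf
  haveI : StrongEpi (coequalizer.desc f hw) :=
    strongEpi_of_strongEpi (coequalizer.π (pullback.fst f f) (pullback.snd f f))
      (coequalizer.desc f hw)
  haveI : IsIso (coequalizer.desc f hw) := isIso_of_mono_of_strongEpi _
  refine ⟨{ W := pullback f f
            left := pullback.fst f f
            right := pullback.snd f f
            w := hw
            isColimit := ?_ }⟩
  refine Cofork.IsColimit.mk _
    (fun s => inv (coequalizer.desc f hw) ≫ coequalizer.desc s.π s.condition)
    (fun s => ?_) (fun s k hk => ?_)
  · show f ≫ inv (coequalizer.desc f hw) ≫ coequalizer.desc s.π s.condition = s.π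
    have h1 : f ≫ inv (coequalizer.desc f hw)
        = coequalizer.π (pullback.fst f f) (pullback.snd f f) := by
      rw [IsIso.comp_inv_eq]
      exact hem.symm
    rw [← Category.assoc, h1, coequalizer.π_desc]
  · simp only [Cofork.π_ofπ] at hk
    show k = inv (coequalizer.desc f hw) ≫ coequalizer.desc s.π s.condition
    have hmk : coequalizer.desc f hw ≫ k = coequalizer.desc s.π s.condition := by
      apply coequalizer.hom_ext
      rw [coequalizer.π_desc, ← Category.assoc, hem]
      exact hk
    rw [← hmk, ← Category.assoc, IsIso.inv_hom_id, Category.id_comp]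

theorem aux_isRegularEpi_comp {X Y Z : C} (f : X ⟶ Y) (g : Y ⟶ Z)
    (hcoeq : ∀ {X Y : C} (f : X ⟶ Y),
      HasCoequalizer (pullback.fst f f) (pullback.snd f f))
    (hstab : ∀ {X Y Z : C} (f : X ⟶ Z) (g : Y ⟶ Z),
      _root_.IsRegularEpi f → _root_.IsRegularEpi (pullback.snd f g))
    (hf : _root_.IsRegularEpi f) (hg : _root_.IsRegularEpi g) : _root_.IsRegularEpi (f ≫ g) := by
  haveI := hf.strongEpi
  haveI := hg.strongEpi
  exact aux_strongEpi_isRegularEpi hcoeq hstab _ (strongEpi_comp f g)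

theorem aux_main
    (hcoeq : ∀ {X Y : C} (f : X ⟶ Y),
      HasCoequalizer (pullback.fst f f) (pullback.snd f f))
    (hstab : ∀ {X Y Z : C} (f : X ⟶ Z) (g : Y ⟶ Z),
      _root_.IsRegularEpi f → _root_.IsRegularEpi (pullback.snd f g))
    {A' A B' B : C}
    (g : A' ⟶ A) (h : B' ⟶ B) (f' : A' ⟶ B') (f : A ⟶ B)
    (hg : _root_.IsRegularEpi g) (w : g ≫ f = f' ≫ h)
    (f'' : pullback g g ⟶ pullback h h)
    (w1 : f'' ≫ pullback.fst h h = pullback.fst g g ≫ f')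
    (w2 : f'' ≫ pullback.snd h h = pullback.snd g g ≫ f')
    (hψ : _root_.IsRegularEpi (pullback.lift f'' (pullback.fst g g) w1)) :
    _root_.IsRegularEpi (pullback.lift f' g w.symm) := by
  -- χ : pullback (pullback.fst h h) f' ⟶ pullback h f
  have cχ : (pullback.fst (pullback.fst h h) f' ≫ pullback.snd h h) ≫ h
      = (pullback.snd (pullback.fst h h) f' ≫ g) ≫ f := by
    rw [Category.assoc, ← pullback.condition (f := h) (g := h), ← Category.assoc,
      pullback.condition (f := pullback.fst h h) (g := f'), Category.assoc, ← w,
      Category.assoc]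
  set χ : pullback (pullback.fst h h) f' ⟶ pullback h f :=
    pullback.lift _ _ cχ with hχdef
  have cη : pullback.snd (pullback.fst h h) f' ≫ g = χ ≫ pullback.snd h f :=
    (pullback.lift_snd _ _ _).symm
  set η : pullback (pullback.fst h h) f' ⟶ pullback g (pullback.snd h f) :=
    pullback.lift _ _ cη with hηdef
  -- inverse of η
  have c1 : (pullback.fst g (pullback.snd h f) ≫ f') ≫ h
      = (pullback.snd g (pullback.snd h f) ≫ pullback.fst h f) ≫ h := by
    rw [Category.assoc, ← w, ← Category.assoc, pullback.condition (f := g),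
      Category.assoc, ← pullback.condition (f := h) (g := f), Category.assoc]
  have c2 : pullback.lift _ _ c1 ≫ pullback.fst h h
      = pullback.fst g (pullback.snd h f) ≫ f' := pullback.lift_fst _ _ _
  set θ : pullback g (pullback.snd h f) ⟶ pullback (pullback.fst h h) f' :=
    pullback.lift _ _ c2 with hθdef
  haveI : IsIso η := by
    refine ⟨θ, ?_, ?_⟩
    · apply pullback.hom_ext
      · apply pullback.hom_ext
        · simp only [hηdef, hθdef, Category.assoc, pullback.lift_fst_assoc, pullback.lift_snd_assoc, pullback.lift_fst, pullback.lift_snd, Category.comp_id, Category.id_comp]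
          exact pullback.condition.symm
        · simp only [hηdef, hθdef, hχdef, Category.assoc, pullback.lift_fst_assoc, pullback.lift_snd_assoc, pullback.lift_fst, pullback.lift_snd, Category.comp_id, Category.id_comp]
      · simp only [hηdef, hθdef, Category.assoc, pullback.lift_fst_assoc, pullback.lift_snd_assoc, pullback.lift_fst, pullback.lift_snd, Category.comp_id, Category.id_comp]
    · apply pullback.hom_ext
      · simp only [hηdef, hθdef, Category.assoc, pullback.lift_fst_assoc, pullback.lift_snd_assoc, pullback.lift_fst, pullback.lift_snd, Category.comp_id, Category.id_comp]
      · apply pullback.hom_ext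
        · simp only [hηdef, hθdef, hχdef, Category.assoc, pullback.lift_fst_assoc, pullback.lift_snd_assoc, pullback.lift_fst, pullback.lift_snd, Category.comp_id, Category.id_comp]
        · simp only [hηdef, hθdef, hχdef, Category.assoc, pullback.lift_fst_assoc, pullback.lift_snd_assoc, pullback.lift_fst, pullback.lift_snd, Category.comp_id, Category.id_comp]
          exact pullback.condition
  have hχeq : χ = η ≫ pullback.snd g (pullback.snd h f) := by
    rw [hηdef, pullback.lift_snd]
  have hsndre : _root_.IsRegularEpi (pullback.snd g (pullback.snd h f)) := hstab g _ hg
  have hχstrong : StrongEpi χ := by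
    rw [hχeq]
    haveI := hsndre.strongEpi
    exact strongEpi_comp _ _
  have hcomp : pullback.lift f'' (pullback.fst g g) w1 ≫ χ
      = pullback.snd g g ≫ pullback.lift f' g w.symm := by
    apply pullback.hom_ext
    · simp only [hχdef, Category.assoc, pullback.lift_fst, pullback.lift_fst_assoc]
      exact w2
    · simp only [hχdef, Category.assoc, pullback.lift_snd, pullback.lift_snd_assoc]
      exact pullback.condition
  have hcompre : StrongEpi (pullback.lift f'' (pullback.fst g g) w1 ≫ χ) := by
    haveI := hψ.strongEpi
    exact strongEpi_comp _ _
  rw [hcomp] at hcompre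
  haveI := hcompre
  haveI : StrongEpi (pullback.lift f' g w.symm) :=
    strongEpi_of_strongEpi (pullback.snd g g) _
  exact aux_strongEpi_isRegularEpi hcoeq hstab _ this

end BournAux

/-- Bourn's lemma: in a regular category, given a commutative square of
regular epimorphisms `g ≫ f = f' ≫ h` and the induced morphism `f''` between
the kernel pairs of `g` and `h`, if one of the two squares formed by `f''`,
`f'` and the kernel-pair projections is a regular pushout, then the square
`g ≫ f = f' ≫ h` is a regular pushout. -/
theorem statement8 [HasFiniteLimits C]
    (hcoeq : ∀ {X Y : C} (f : X ⟶ Y),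
      HasCoequalizer (pullback.fst f f) (pullback.snd f f))
    (hstab : ∀ {X Y Z : C} (f : X ⟶ Z) (g : Y ⟶ Z),
      _root_.IsRegularEpi f → _root_.IsRegularEpi (pullback.snd f g))
    {A' A B' B : C}
    (g : A' ⟶ A) (h : B' ⟶ B) (f' : A' ⟶ B') (f : A ⟶ B)
    (hg : _root_.IsRegularEpi g) (hh : _root_.IsRegularEpi h)
    (hf' : _root_.IsRegularEpi f') (hf : _root_.IsRegularEpi f)
    (w : g ≫ f = f' ≫ h)
    (f'' : pullback g g ⟶ pullback h h)
    (w1 : f'' ≫ pullback.fst h h = pullback.fst g g ≫ f')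
    (w2 : f'' ≫ pullback.snd h h = pullback.snd g g ≫ f')
    (hyp : IsRegularPushout (pullback.fst g g) f'' f' (pullback.fst h h) w1 ∨
           IsRegularPushout (pullback.snd g g) f'' f' (pullback.snd h h) w2) :
    IsRegularPushout g f' f h w.symm := by
  refine ⟨hg, hh, hf', hf, ?_⟩
  rcases hyp with ⟨_, _, _, _, hψ⟩ | ⟨_, _, _, _, hψ⟩
  · exact aux_main hcoeq hstab g h f' f hg w f'' w1 w2 hψ
  · set k' := (pullbackSymmetry g g).hom ≫ f'' ≫ (pullbackSymmetry h h).hom with hk'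
    have w1' : k' ≫ pullback.fst h h = pullback.fst g g ≫ f' := by
      simp only [hk', Category.assoc, pullbackSymmetry_hom_comp_fst, w2,
        pullbackSymmetry_hom_comp_fst_assoc, pullbackSymmetry_hom_comp_snd,
        pullbackSymmetry_hom_comp_snd_assoc]
    have w2' : k' ≫ pullback.snd h h = pullback.snd g g ≫ f' := by
      simp only [hk', Category.assoc, pullbackSymmetry_hom_comp_snd, w1,
        pullbackSymmetry_hom_comp_snd_assoc, pullbackSymmetry_hom_comp_fst,
        pullbackSymmetry_hom_comp_fst_assoc]
    have cι : (pullback.fst (pullback.snd h h) f' ≫ (pullbackSymmetry h h).hom) ≫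
        pullback.fst h h = pullback.snd (pullback.snd h h) f' ≫ f' := by
      simp [pullback.condition (f := pullback.snd h h) (g := f')]
    set ι := pullback.lift _ _ cι with hι
    have cι' : (pullback.fst (pullback.fst h h) f' ≫ (pullbackSymmetry h h).hom) ≫
        pullback.snd h h = pullback.snd (pullback.fst h h) f' ≫ f' := by
      simp [pullback.condition (f := pullback.fst h h) (g := f')]
    haveI : IsIso ι := by
      refine ⟨pullback.lift _ _ cι', ?_, ?_⟩
      · apply pullback.hom_ext
        · apply pullback.hom_ext <;> simp only [hι, hk', Category.assoc, pullback.lift_fst_assoc, pullback.lift_snd_assoc, pullback.lift_fst, pullback.lift_snd, pullbackSymmetry_hom_comp_fst, pullbackSymmetry_hom_comp_snd, pullbackSymmetry_hom_comp_fst_assoc, pullbackSymmetry_hom_comp_snd_assoc, Category.comp_id, Category.id_comp]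
        · simp only [hι, hk', Category.assoc, pullback.lift_fst_assoc, pullback.lift_snd_assoc, pullback.lift_fst, pullback.lift_snd, pullbackSymmetry_hom_comp_fst, pullbackSymmetry_hom_comp_snd, pullbackSymmetry_hom_comp_fst_assoc, pullbackSymmetry_hom_comp_snd_assoc, Category.comp_id, Category.id_comp]
      · apply pullback.hom_ext
        · apply pullback.hom_ext <;> simp only [hι, hk', Category.assoc, pullback.lift_fst_assoc, pullback.lift_snd_assoc, pullback.lift_fst, pullback.lift_snd, pullbackSymmetry_hom_comp_fst, pullbackSymmetry_hom_comp_snd, pullbackSymmetry_hom_comp_fst_assoc, pullbackSymmetry_hom_comp_snd_assoc, Category.comp_id, Category.id_comp]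
        · simp only [hι, hk', Category.assoc, pullback.lift_fst_assoc, pullback.lift_snd_assoc, pullback.lift_fst, pullback.lift_snd, pullbackSymmetry_hom_comp_fst, pullbackSymmetry_hom_comp_snd, pullbackSymmetry_hom_comp_fst_assoc, pullbackSymmetry_hom_comp_snd_assoc, Category.comp_id, Category.id_comp]
    have hψ' : pullback.lift k' (pullback.fst g g) w1'
        = (pullbackSymmetry g g).hom ≫ pullback.lift f'' (pullback.snd g g) w2 ≫ ι := by
      apply pullback.hom_ext
      · apply pullback.hom_ext <;> simp only [hι, hk', Category.assoc, pullback.lift_fst_assoc, pullback.lift_snd_assoc, pullback.lift_fst, pullback.lift_snd, pullbackSymmetry_hom_comp_fst, pullbackSymmetry_hom_comp_snd, pullbackSymmetry_hom_comp_fst_assoc, pullbackSymmetry_hom_comp_snd_assoc, Category.comp_id, Category.id_comp]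
      · simp only [hι, hk', Category.assoc, pullback.lift_fst_assoc, pullback.lift_snd_assoc, pullback.lift_fst, pullback.lift_snd, pullbackSymmetry_hom_comp_fst, pullbackSymmetry_hom_comp_snd, pullbackSymmetry_hom_comp_fst_assoc, pullbackSymmetry_hom_comp_snd_assoc, Category.comp_id, Category.id_comp]
    have hre' : _root_.IsRegularEpi (pullback.lift k' (pullback.fst g g) w1') := by
      rw [hψ']
      haveI := hψ.strongEpi
      haveI : StrongEpi (pullback.lift f'' (pullback.snd g g) w2 ≫ ι) :=
        strongEpi_comp _ _
      exact aux_strongEpi_isRegularEpi hcoeq hstab _ (strongEpi_comp _ _)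
    exact aux_main hcoeq hstab g h f' f hg w k' w1' w2' hre'
end

section
/- In a regular category, given points (f : A → B, s : B → A) and (f' : A' → B', s' : B' → A') together with regular epimorphisms α : A → A' and β : B → B' such that f' ∘ α = β ∘ f and α ∘ s = s' ∘ β, if the point (f, s) is stably strong then the square f' ∘ α = β ∘ f is a regular pushout. -/
open CategoryTheory CategoryTheory.Limits

universe v u

variable {C : Type u} [Category.{v} C]

section Aux

variable {C : Type u} [Category.{v} C]

/-- A split epimorphism is a regular epimorphism. -/
lemma isRegularEpi_of_split' {A B : C} (f : A ⟶ B) (s : B ⟶ A) (hs : s ≫ f = 𝟙 B) :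
    _root_.IsRegularEpi f := by
  haveI : IsSplitEpi f := IsSplitEpi.mk' ⟨s, hs⟩
  exact ⟨RegularEpi.ofSplitEpi f⟩

end Aux

/-- In a regular category, a regular epimorphism of points whose domain point
is stably strong is a regular pushout. -/
theorem statement9 [HasFiniteLimits C]
    (hcoeq : ∀ {X Y : C} (f : X ⟶ Y),
      HasCoequalizer (pullback.fst f f) (pullback.snd f f))
    (hstab : ∀ {X Y Z : C} (f : X ⟶ Z) (g : Y ⟶ Z),
      _root_.IsRegularEpi f → _root_.IsRegularEpi (pullback.snd f g))
    {A B A' B' : C}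
    (f : A ⟶ B) (s : B ⟶ A) (hs : s ≫ f = 𝟙 B)
    (f' : A' ⟶ B') (s' : B' ⟶ A') (hs' : s' ≫ f' = 𝟙 B')
    (α : A ⟶ A') (β : B ⟶ B') (hα : _root_.IsRegularEpi α) (hβ : _root_.IsRegularEpi β)
    (w1 : α ≫ f' = f ≫ β) (w2 : s ≫ α = β ≫ s')
    (h : IsStablyStrongPoint f s hs) :
    IsRegularPushout α f f' β w1.symm := by
  classical
  -- Notation for the pullback `P` of `β` and `f'`.
  set p1 := pullback.fst β f' with hp1
  set p2 := pullback.snd β f' with hp2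
  set φ : A ⟶ pullback β f' := pullback.lift f α w1.symm with hφ
  have hφ1 : φ ≫ p1 = f := pullback.lift_fst _ _ _
  have hφ2 : φ ≫ p2 = α := pullback.lift_snd _ _ _
  have hP : p1 ≫ β = p2 ≫ f' := pullback.condition
  -- Step 1: φ is an extremal epimorphism.
  have hext : ∀ (M : C) (m : M ⟶ pullback β f'), Mono m →
      ∀ u : A ⟶ M, u ≫ m = φ → IsIso m := by
    intro M m hm u hu
    haveI := hm
    set k1 := pullback.fst β β with hk1
    set k2 := pullback.snd β β with hk2
    have hK : k1 ≫ β = k2 ≫ β := pullback.condition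
    set Sf := pullback.fst k1 f with hSf
    set Ss := pullback.snd k1 f with hSs
    have hS : Sf ≫ k1 = Ss ≫ f := pullback.condition
    have hΘw : (Sf ≫ k2) ≫ β = (Ss ≫ α) ≫ f' := by
      simp only [Category.assoc]
      rw [← hK, reassoc_of% hS, ← w1]
    set Θ : pullback k1 f ⟶ pullback β f' := pullback.lift (Sf ≫ k2) (Ss ≫ α) hΘw with hΘ
    have hΘ1 : Θ ≫ p1 = Sf ≫ k2 := pullback.lift_fst _ _ _
    have hΘ2 : Θ ≫ p2 = Ss ≫ α := pullback.lift_snd _ _ _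
    set Δ : B ⟶ pullback β β := pullback.lift (𝟙 B) (𝟙 B) rfl with hΔ
    have hΔ1 : Δ ≫ k1 = 𝟙 B := pullback.lift_fst _ _ _
    have hΔ2 : Δ ≫ k2 = 𝟙 B := pullback.lift_snd _ _ _
    -- the strong point obtained by pulling back `(f, s)` along `k1`
    have hJ := h k1 Δ
    set τ : pullback β β ⟶ pullback k1 f := pullback.lift (𝟙 (pullback β β)) (k1 ≫ s)
      (by simp [hs]) with hτ
    have hτ1 : τ ≫ Sf = 𝟙 _ := pullback.lift_fst _ _ _
    have hτ2 : τ ≫ Ss = k1 ≫ s := pullback.lift_snd _ _ _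
    -- candidate mono: the pullback of `m` along `Θ`
    set n := pullback.fst Θ m with hn
    have hNm : Mono n := pullback.fst_of_mono
    have hNc : n ≫ Θ = pullback.snd Θ m ≫ m := pullback.condition
    set Df := pullback.fst Δ Sf with hDf
    set Ds := pullback.snd Δ Sf with hDs
    have hD : Df ≫ Δ = Ds ≫ Sf := pullback.condition
    have hiso : IsIso n := by
      refine hJ n hNm ?_ ?_
      · -- the projection factors through `n`
        have key : Ds ≫ Θ = ((Ds ≫ Ss) ≫ u) ≫ m := by
          simp only [Category.assoc]
          rw [hu]
          apply pullback.hom_ext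
          · simp only [Category.assoc]
            rw [hΘ1, hφ1, ← hS, ← reassoc_of% hD, ← reassoc_of% hD, hΔ1, hΔ2]
          · simp only [Category.assoc]
            rw [hΘ2, hφ2]
        exact ⟨pullback.lift Ds ((Ds ≫ Ss) ≫ u) key, pullback.lift_fst _ _ _⟩
      · -- the section factors through `n`
        have key : τ ≫ Θ = ((k2 ≫ s) ≫ u) ≫ m := by
          simp only [Category.assoc]
          rw [hu]
          apply pullback.hom_ext
          · simp only [Category.assoc]
            rw [hΘ1, hφ1, reassoc_of% hτ1, hs, Category.comp_id]
          · simp only [Category.assoc]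
            rw [hΘ2, hφ2, reassoc_of% hτ2, w2, reassoc_of% hK]
        exact ⟨pullback.lift τ ((k2 ≫ s) ≫ u) key, pullback.lift_fst _ _ _⟩
    -- hence Θ factors through m
    haveI := hiso
    have hv : (inv n ≫ pullback.snd Θ m) ≫ m = Θ := by
      rw [Category.assoc, ← hNc, IsIso.inv_hom_id_assoc]
    -- the cover of P obtained by pulling back α along p2
    have hρ : _root_.IsRegularEpi (pullback.snd α p2) := hstab α p2 hα
    set Wf := pullback.fst α p2 with hWf
    set ρ := pullback.snd α p2 with hρ'
    have hW : Wf ≫ α = ρ ≫ p2 := pullback.condition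
    have hc1 : (Wf ≫ f) ≫ β = (ρ ≫ p1) ≫ β := by
      simp only [Category.assoc]
      rw [← w1, reassoc_of% hW, ← hP]
    set kcomp : pullback α p2 ⟶ pullback β β := pullback.lift (Wf ≫ f) (ρ ≫ p1) hc1 with hkc
    have hkc1 : kcomp ≫ k1 = Wf ≫ f := pullback.lift_fst _ _ _
    have hkc2 : kcomp ≫ k2 = ρ ≫ p1 := pullback.lift_snd _ _ _
    set jhom : pullback α p2 ⟶ pullback k1 f := pullback.lift kcomp Wf hkc1 with hj
    have hj1 : jhom ≫ Sf = kcomp := pullback.lift_fst _ _ _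
    have hj2 : jhom ≫ Ss = Wf := pullback.lift_snd _ _ _
    have hjΘ : jhom ≫ Θ = ρ := by
      apply pullback.hom_ext
      · simp only [Category.assoc]
        rw [hΘ1, reassoc_of% hj1, hkc2]
      · simp only [Category.assoc]
        rw [hΘ2, reassoc_of% hj2, hW]
    obtain ⟨re⟩ := hρ
    haveI := re
    haveI : StrongEpi ρ := by haveI : CategoryTheory.IsRegularEpi ρ := ⟨⟨re⟩⟩; infer_instance
    have sq : CommSq (jhom ≫ (inv n ≫ pullback.snd Θ m)) ρ m (𝟙 (pullback β f')) :=
      ⟨by rw [Category.assoc, hv, hjΘ, Category.comp_id]⟩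
    haveI : IsSplitEpi m := IsSplitEpi.mk' ⟨sq.lift, sq.fac_right⟩
    exact isIso_of_mono_of_isSplitEpi m
  -- Step 2: factor φ through the coequalizer of its kernel pair.
  haveI := hcoeq φ
  set Kf := pullback.fst φ φ with hKf
  set Ks := pullback.snd φ φ with hKs
  set e := coequalizer.π Kf Ks with he
  set m : coequalizer Kf Ks ⟶ pullback β f' := coequalizer.desc φ pullback.condition with hm
  have hem : e ≫ m = φ := coequalizer.π_desc _ _
  have hcond : Kf ≫ e = Ks ≫ e := coequalizer.condition _ _
  have hereg : _root_.IsRegularEpi e := ⟨coequalizerRegular _ _⟩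
  -- m is a monomorphism
  have hmono : Mono m := by
    set Lf := pullback.fst φ m with hLf
    set Ls := pullback.snd φ m with hLs
    have hL : Lf ≫ φ = Ls ≫ m := pullback.condition
    set pf := pullback.fst m m with hpf
    set ps := pullback.snd m m with hps
    have hPm : pf ≫ m = ps ≫ m := pullback.condition
    have hq1w : Kf ≫ φ = (Ks ≫ e) ≫ m := by
      simp only [Category.assoc]
      rw [hem]
      exact pullback.condition
    set q1 : pullback φ φ ⟶ pullback φ m := pullback.lift Kf (Ks ≫ e) hq1w with hq1
    have hq11 : q1 ≫ Lf = Kf := pullback.lift_fst _ _ _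
    have hq12 : q1 ≫ Ls = Ks ≫ e := pullback.lift_snd _ _ _
    have hq2w : (Lf ≫ e) ≫ m = Ls ≫ m := by
      simp only [Category.assoc]
      rw [hem]
      exact hL
    set q2 : pullback φ m ⟶ pullback m m := pullback.lift (Lf ≫ e) Ls hq2w with hq2
    have hq21 : q2 ≫ pf = Lf ≫ e := pullback.lift_fst _ _ _
    have hq22 : q2 ≫ ps = Ls := pullback.lift_snd _ _ _
    -- q1 is an epimorphism
    have hV1 : _root_.IsRegularEpi (pullback.snd e Ls) := hstab e Ls hereg
    have hepi1 : Epi q1 := by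
      have hV1c : pullback.fst e Ls ≫ e = pullback.snd e Ls ≫ Ls := pullback.condition
      have hr1w : (pullback.snd e Ls ≫ Lf) ≫ φ = pullback.fst e Ls ≫ φ := by
        simp only [Category.assoc]
        rw [hL, ← reassoc_of% hV1c, hem]
      set r1 : pullback e Ls ⟶ pullback φ φ :=
        pullback.lift (pullback.snd e Ls ≫ Lf) (pullback.fst e Ls) hr1w with hr1
      have hr11 : r1 ≫ Kf = pullback.snd e Ls ≫ Lf := pullback.lift_fst _ _ _
      have hr12 : r1 ≫ Ks = pullback.fst e Ls := pullback.lift_snd _ _ _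
      have hr1q : r1 ≫ q1 = pullback.snd e Ls := by
        apply pullback.hom_ext
        · simp only [Category.assoc]
          rw [hq11, hr11]
        · simp only [Category.assoc]
          rw [hq12, reassoc_of% hr12, hV1c]
      obtain ⟨re⟩ := hV1
      haveI := re
      have : Epi (r1 ≫ q1) := by rw [hr1q]; haveI : CategoryTheory.IsRegularEpi (pullback.snd e Ls) := ⟨⟨re⟩⟩; infer_instance
      exact epi_of_epi r1 q1
    -- q2 is an epimorphism
    have hV2 : _root_.IsRegularEpi (pullback.snd e pf) := hstab e pf hereg
    have hepi2 : Epi q2 := by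
      have hV2c : pullback.fst e pf ≫ e = pullback.snd e pf ≫ pf := pullback.condition
      have hr2w : pullback.fst e pf ≫ φ = (pullback.snd e pf ≫ ps) ≫ m := by
        simp only [Category.assoc]
        rw [← hPm, ← reassoc_of% hV2c, hem]
      set r2 : pullback e pf ⟶ pullback φ m :=
        pullback.lift (pullback.fst e pf) (pullback.snd e pf ≫ ps) hr2w with hr2
      have hr21 : r2 ≫ Lf = pullback.fst e pf := pullback.lift_fst _ _ _
      have hr22 : r2 ≫ Ls = pullback.snd e pf ≫ ps := pullback.lift_snd _ _ _
      have hr2q : r2 ≫ q2 = pullback.snd e pf := by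
        apply pullback.hom_ext
        · simp only [Category.assoc]
          rw [hq21, reassoc_of% hr21, hV2c]
        · simp only [Category.assoc]
          rw [hq22, hr22]
      obtain ⟨re⟩ := hV2
      haveI := re
      have : Epi (r2 ≫ q2) := by rw [hr2q]; haveI : CategoryTheory.IsRegularEpi (pullback.snd e pf) := ⟨⟨re⟩⟩; infer_instance
      exact epi_of_epi r2 q2
    haveI := hepi1; haveI := hepi2
    have hfs : pf = ps := by
      have h1 : (q1 ≫ q2) ≫ pf = (q1 ≫ q2) ≫ ps := by
        simp only [Category.assoc]
        rw [hq21, hq22, reassoc_of% hq11, hq12, hcond]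
      haveI : Epi (q1 ≫ q2) := epi_comp _ _
      exact (cancel_epi (q1 ≫ q2)).mp h1
    refine ⟨fun {Z} a b hab => ?_⟩
    set l := pullback.lift a b hab with hl
    have h1 : l ≫ pf = a := pullback.lift_fst _ _ _
    have h2 : l ≫ ps = b := pullback.lift_snd _ _ _
    rw [← h1, ← h2, hfs]
  -- Step 3: conclude
  have hmiso : IsIso m := hext _ m hmono e hem
  have hφreg : _root_.IsRegularEpi φ := by
    haveI := hmiso
    have hepie : Epi e := inferInstance
    have hepiφ : Epi φ := by
      have h2 : Epi (e ≫ m) := epi_comp _ _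
      rwa [hem] at h2
    haveI := hepiφ
    refine ⟨regularEpiOfKernelPair φ ?_⟩
    refine Cofork.IsColimit.mk _
      (fun c => inv m ≫ coequalizer.desc c.π c.condition) (fun c => ?_) (fun c d hd => ?_)
    · show φ ≫ (inv m ≫ coequalizer.desc c.π c.condition) = c.π
      have key : (e ≫ m) ≫ (inv m ≫ coequalizer.desc c.π c.condition) = c.π := by
        rw [Category.assoc, IsIso.hom_inv_id_assoc, coequalizer.π_desc]
      rw [hem] at key
      exact key
    · have hfac : φ ≫ (inv m ≫ coequalizer.desc c.π c.condition) = c.π := by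
        have key : (e ≫ m) ≫ (inv m ≫ coequalizer.desc c.π c.condition) = c.π := by
          rw [Category.assoc, IsIso.hom_inv_id_assoc, coequalizer.π_desc]
        rw [hem] at key
        exact key
      refine (cancel_epi φ).mp ?_
      rw [hfac]
      exact hd
  exact ⟨hα, hβ, isRegularEpi_of_split' f s hs, isRegularEpi_of_split' f' s' hs', hφreg⟩
end

section
/- Let C be a pointed finitely complete category and Y an object of C. The following conditions are equivalent: (i) Y is a strongly unital object; (ii) for every morphism f : X → Y, the point (π_X : X × Y → X, ⟨1_X, f⟩ : X → X × Y) is stably strong; (iii) for every morphism f : X → Y, the point (π_X : X × Y → X, ⟨1_X, f⟩ : X → X × Y) is strong; (iv) for every split right punctual span (s : X → Z, f : Z → X, g : Z → Y, t : Y → Z), the morphism ⟨f, g⟩ : Z → X × Y is a strong epimorphism. -/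
open CategoryTheory CategoryTheory.Limits

universe v u

variable {C : Type u} [Category.{v} C]

attribute [local simp] prod.lift_fst prod.lift_snd prod.lift_fst_assoc prod.lift_snd_assoc
  pullback.lift_fst pullback.lift_snd pullback.lift_fst_assoc pullback.lift_snd_assoc

section Aux

lemma jse_precomp_isIso {X X' Y A : C} {r : X ⟶ A} {s : Y ⟶ A} (a : X' ⟶ X) [IsIso a]
    (h : JointlyStronglyEpi r s) : JointlyStronglyEpi (a ≫ r) s := by
  rintro M m hm ⟨r', hr'⟩ hs
  exact h m hm ⟨inv a ≫ r', by rw [Category.assoc, hr', IsIso.inv_hom_id_assoc]⟩ hs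

lemma jse_comp_isIso {X Y A A' : C} {r : X ⟶ A} {s : Y ⟶ A} (i : A ⟶ A') [IsIso i]
    (h : JointlyStronglyEpi r s) : JointlyStronglyEpi (r ≫ i) (s ≫ i) := by
  rintro M m hm ⟨r', hr'⟩ ⟨s', hs'⟩
  have hmono : Mono (m ≫ inv i) := mono_comp _ _
  have : IsIso (m ≫ inv i) :=
    h (m ≫ inv i) hmono
      ⟨r', by rw [← Category.assoc, hr']; simp⟩ ⟨s', by rw [← Category.assoc, hs']; simp⟩
  have : IsIso ((m ≫ inv i) ≫ i) := inferInstance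
  simpa using this

lemma isStrongPoint_of_iso [HasPullbacks C] {A A' B : C} {p : A ⟶ B} {s : B ⟶ A}
    {p' : A' ⟶ B} {s' : B ⟶ A'} (i : A ≅ A') (hp : i.hom ≫ p' = p) (hs : s ≫ i.hom = s')
    (h : IsStrongPoint p s) : IsStrongPoint p' s' := by
  intro X g
  have hp' : i.inv ≫ p = p' := by rw [← hp, Iso.inv_hom_id_assoc]
  let j : pullback g p ⟶ pullback g p' :=
    pullback.lift (pullback.fst g p) (pullback.snd g p ≫ i.hom)
      (by rw [Category.assoc, hp, pullback.condition])
  let j' : pullback g p' ⟶ pullback g p :=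
    pullback.lift (pullback.fst g p') (pullback.snd g p' ≫ i.inv)
      (by rw [Category.assoc, hp', pullback.condition])
  have hji : IsIso j' := by
    refine ⟨j, ?_, ?_⟩
    · apply pullback.hom_ext <;> simp [j, j']
    · apply pullback.hom_ext <;> simp [j, j']
  have hsnd : pullback.snd g p' = j' ≫ pullback.snd g p ≫ i.hom := by
    simp [j']
  rw [hsnd, ← hs]
  exact jse_precomp_isIso j' (jse_comp_isIso i.hom (h g))

/-- The canonical isomorphism `W ⨯ Y ≅ pullback h prod.fst`. -/
noncomputable def prodPullbackIso [HasFiniteLimits C] {W X Y : C} (h : W ⟶ X) :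
    W ⨯ Y ≅ pullback h (prod.fst : X ⨯ Y ⟶ X) where
  hom := pullback.lift prod.fst (prod.lift (prod.fst ≫ h) prod.snd) (by simp)
  inv := prod.lift (pullback.fst h prod.fst) (pullback.snd h prod.fst ≫ prod.snd)
  hom_inv_id := by apply Limits.prod.hom_ext <;> simp
  inv_hom_id := by
    apply pullback.hom_ext
    · simp
    · apply Limits.prod.hom_ext
      · simpa using pullback.condition (f := h) (g := (prod.fst : X ⨯ Y ⟶ X))
      · simp

lemma strongPoint_pullback_iff [HasFiniteLimits C] {W X Y : C} (h : W ⟶ X) (f : X ⟶ Y) :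
    IsStrongPoint (pullback.fst h (prod.fst : X ⨯ Y ⟶ X))
      (pullback.lift (𝟙 W) (h ≫ prod.lift (𝟙 X) f) (by simp)) ↔
    IsStrongPoint (prod.fst : W ⨯ Y ⟶ W) (prod.lift (𝟙 W) (h ≫ f)) := by
  have hp : (prodPullbackIso (Y := Y) h).hom ≫ pullback.fst h prod.fst = prod.fst := by
    simp [prodPullbackIso]
  have hs : prod.lift (𝟙 W) (h ≫ f) ≫ (prodPullbackIso (Y := Y) h).hom =
      pullback.lift (𝟙 W) (h ≫ prod.lift (𝟙 X) f) (by simp) := by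
    apply pullback.hom_ext
    · simp [prodPullbackIso]
    · apply Limits.prod.hom_ext <;> simp [prodPullbackIso]
  constructor
  · intro hyp
    refine isStrongPoint_of_iso (prodPullbackIso (Y := Y) h).symm ?_ ?_ hyp
    · rw [Iso.symm_hom, ← hp, Iso.inv_hom_id_assoc]
    · rw [Iso.symm_hom, ← hs, Category.assoc, Iso.hom_inv_id, Category.comp_id]
  · intro hyp
    exact isStrongPoint_of_iso (prodPullbackIso (Y := Y) h) hp hs hyp

lemma strongEpi_of_extremal [HasFiniteLimits C] {A B : C} (e : A ⟶ B)
    (he : ∀ ⦃M : C⦄ (m : M ⟶ B), Mono m → (∃ e' : A ⟶ M, e' ≫ m = e) → IsIso m) :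
    StrongEpi e := by
  constructor
  · refine ⟨fun {Z} u v huv => ?_⟩
    have : IsIso (equalizer.ι u v) :=
      he (equalizer.ι u v) inferInstance ⟨equalizer.lift e huv, equalizer.lift_ι _ _⟩
    rw [← cancel_epi (equalizer.ι u v), equalizer.condition]
  · intro M N z hz
    constructor
    intro u v sq
    have : IsIso (pullback.fst v z) :=
      he (pullback.fst v z) inferInstance
        ⟨pullback.lift e u sq.w.symm, pullback.lift_fst _ _ _⟩
    refine ⟨⟨⟨inv (pullback.fst v z) ≫ pullback.snd v z, ?_, ?_⟩⟩⟩
    · calc e ≫ inv (pullback.fst v z) ≫ pullback.snd v z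
          = (pullback.lift e u sq.w.symm ≫ pullback.fst v z) ≫
              inv (pullback.fst v z) ≫ pullback.snd v z := by
            rw [pullback.lift_fst]
        _ = pullback.lift e u sq.w.symm ≫ pullback.snd v z := by
            simp only [Category.assoc, IsIso.hom_inv_id_assoc]
        _ = u := pullback.lift_snd _ _ _
    · rw [Category.assoc, ← pullback.condition, IsIso.inv_hom_id_assoc]

end Aux

/-- In a pointed finitely complete category, TFAE for an object `Y`:
(i) `Y` is strongly unital; (ii) for every `f : X ⟶ Y` the point
`(π_X, ⟨1_X, f⟩)` is stably strong; (iii) for every `f : X ⟶ Y` the point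
`(π_X, ⟨1_X, f⟩)` is strong; (iv) for every split right punctual span the
comparison `⟨f, g⟩` is a strong epimorphism. -/
theorem statement10 [HasFiniteLimits C] [HasZeroObject C] [HasZeroMorphisms C]
    (Y : C) :
    List.TFAE [StronglyUnitalObject Y,
      ∀ ⦃X : C⦄ (f : X ⟶ Y),
        IsStablyStrongPoint (prod.fst : X ⨯ Y ⟶ X) (prod.lift (𝟙 X) f) (prod.lift_fst _ _),
      ∀ ⦃X : C⦄ (f : X ⟶ Y),
        IsStrongPoint (prod.fst : X ⨯ Y ⟶ X) (prod.lift (𝟙 X) f),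
      ∀ ⦃X Z : C⦄ (s : X ⟶ Z) (f : Z ⟶ X) (g : Z ⟶ Y) (t : Y ⟶ Z),
        s ≫ f = 𝟙 X → t ≫ g = 𝟙 Y → t ≫ f = 0 →
        StrongEpi (prod.lift f g : Z ⟶ X ⨯ Y)] := by
  tfae_have 1 → 3 := by
    intro h1 W k
    have := (strongPoint_pullback_iff k (𝟙 Y)).mp (h1 k)
    rwa [Category.comp_id] at this
  tfae_have 3 → 2 := by
    intro h3 X f W g
    exact (strongPoint_pullback_iff g f).mpr (h3 (g ≫ f))
  tfae_have 2 → 1 := by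
    intro h2
    exact h2 (𝟙 Y)
  tfae_have 3 → 4 := by
    intro h3 X Z s f g t hsf htg htf
    apply strongEpi_of_extremal
    rintro M m hm ⟨e', he'⟩
    have h01 : t ≫ e' ≫ m = prod.lift (0 : Y ⟶ X) (𝟙 Y) := by
      rw [he', prod.comp_lift, htf, htg]
    refine h3 (s ≫ g) (0 : Y ⟶ X) m hm
      ⟨(pullback.snd (0 : Y ⟶ X) prod.fst ≫ prod.snd) ≫ t ≫ e', ?_⟩
      ⟨s ≫ e', ?_⟩
    · simp only [Category.assoc]
      rw [h01]
      apply Limits.prod.hom_ext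
      · simp [← pullback.condition]
      · simp
    · rw [Category.assoc, he', prod.comp_lift, hsf]
  tfae_have 4 → 3 := by
    intro h4 X f V g M m hm hr hs
    obtain ⟨r', hr'⟩ := hr
    obtain ⟨s', hs'⟩ := hs
    haveI := hm
    let t' : Y ⟶ M :=
      pullback.lift (0 : Y ⟶ V) (prod.lift (0 : Y ⟶ X) (𝟙 Y)) (by simp) ≫ r'
    have ht'm : t' ≫ m = prod.lift (0 : Y ⟶ X) (𝟙 Y) := by
      simp [t', hr']
    have hse : StrongEpi (prod.lift (m ≫ prod.fst) (m ≫ prod.snd)) := by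
      refine h4 s' (m ≫ prod.fst) (m ≫ prod.snd) t' ?_ ?_ ?_
      · rw [← Category.assoc, hs']; simp
      · rw [← Category.assoc, ht'm]; simp
      · rw [← Category.assoc, ht'm]; simp
    have hmm : prod.lift (m ≫ prod.fst) (m ≫ prod.snd) = m := by
      apply Limits.prod.hom_ext <;> simp
    rw [hmm] at hse
    exact isIso_of_mono_of_strongEpi m
  tfae_finish
end

section
/- In a pointed regular category, an object Y is strongly unital if and only if Y is both unital and subtractive. -/
open CategoryTheory CategoryTheory.Limits

universe v u

variable {C : Type u} [Category.{v} C]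

attribute [local simp] prod.lift_fst prod.lift_snd prod.lift_fst_assoc prod.lift_snd_assoc
attribute [local simp] pullback.lift_fst pullback.lift_snd pullback.lift_fst_assoc pullback.lift_snd_assoc

section Auxiliary

/-! ### Generalities about jointly strongly epimorphic cospans -/

theorem JointlyStronglyEpi.factor {X Y X' Y' A : C} {r : X ⟶ A} {s : Y ⟶ A}
    (h : JointlyStronglyEpi r s) {r₀ : X' ⟶ A} {s₀ : Y' ⟶ A}
    (a : X ⟶ X') (b : Y ⟶ Y') (hr : a ≫ r₀ = r) (hs : b ≫ s₀ = s) :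
    JointlyStronglyEpi r₀ s₀ := by
  intro M m hm h1 h2
  obtain ⟨r', hr'⟩ := h1
  obtain ⟨s', hs'⟩ := h2
  exact h m hm ⟨a ≫ r', by rw [Category.assoc, hr', hr]⟩
    ⟨b ≫ s', by rw [Category.assoc, hs', hs]⟩

theorem JointlyStronglyEpi.comp_iso {X Y A A' : C} {r : X ⟶ A} {s : Y ⟶ A}
    (h : JointlyStronglyEpi r s) (i : A ⟶ A') [IsIso i] :
    JointlyStronglyEpi (r ≫ i) (s ≫ i) := by
  intro M m hm h1 h2
  obtain ⟨r', hr'⟩ := h1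
  obtain ⟨s', hs'⟩ := h2
  haveI : Mono m := hm
  have key : IsIso (m ≫ inv i) := by
    refine h (m ≫ inv i) (mono_comp _ _) ⟨r', ?_⟩ ⟨s', ?_⟩
    · rw [← Category.assoc, hr', Category.assoc, IsIso.hom_inv_id, Category.comp_id]
    · rw [← Category.assoc, hs', Category.assoc, IsIso.hom_inv_id, Category.comp_id]
  exact IsIso.of_isIso_comp_right m (inv i)

/-! ### Generalities about regular epimorphisms -/

theorem IsRegularEpi.comp_isIso {A B B' : C} {f : A ⟶ B} (h : _root_.IsRegularEpi f)
    (i : B ⟶ B') [IsIso i] : _root_.IsRegularEpi (f ≫ i) := by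
  obtain ⟨h⟩ := h
  have w : h.left ≫ (f ≫ i) = h.right ≫ (f ≫ i) := by
    rw [← Category.assoc, h.w, Category.assoc]
  refine ⟨⟨h.W, h.left, h.right, w, ?_⟩⟩
  refine Cofork.IsColimit.mk _ (fun s => inv i ≫ h.isColimit.desc s) (fun s => ?_)
    (fun s m' hm' => ?_)
  · have := Cofork.IsColimit.π_desc (t := s) h.isColimit
    rw [Cofork.π_ofπ] at this
    rw [Cofork.π_ofπ, Category.assoc, IsIso.hom_inv_id_assoc, this]
  · skip
    have : i ≫ m' = h.isColimit.desc s := by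
      apply Cofork.IsColimit.hom_ext h.isColimit
      rw [Cofork.IsColimit.π_desc, Cofork.π_ofπ]
      rw [Cofork.π_ofπ] at hm'
      rw [← Category.assoc, ← hm', Category.assoc]
    rw [← this, IsIso.inv_hom_id_assoc]

theorem IsRegularEpi.isIso_comp {A' A B : C} {f : A ⟶ B} (h : _root_.IsRegularEpi f)
    (i : A' ⟶ A) [IsIso i] : _root_.IsRegularEpi (i ≫ f) := by
  obtain ⟨h⟩ := h
  have w : (h.left ≫ inv i) ≫ (i ≫ f) = (h.right ≫ inv i) ≫ (i ≫ f) := by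
    simp only [Category.assoc, IsIso.inv_hom_id_assoc, h.w]
  refine ⟨⟨h.W, h.left ≫ inv i, h.right ≫ inv i, w, ?_⟩⟩
  refine Cofork.IsColimit.mk _
    (fun s => h.isColimit.desc (Cofork.ofπ (inv i ≫ s.π)
      (by rw [← Category.assoc, ← Category.assoc]; exact s.condition)))
    (fun s => ?_) (fun s m' hm' => ?_)
  · have := Cofork.IsColimit.π_desc
      (t := Cofork.ofπ (inv i ≫ s.π)
        (by rw [← Category.assoc, ← Category.assoc]; exact s.condition)) h.isColimit
    rw [Cofork.π_ofπ, Cofork.π_ofπ] at this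
    rw [Cofork.π_ofπ, Category.assoc, this, IsIso.hom_inv_id_assoc]
  · skip
    apply Cofork.IsColimit.hom_ext h.isColimit
    rw [Cofork.IsColimit.π_desc, Cofork.π_ofπ, Cofork.π_ofπ]
    rw [Cofork.π_ofπ] at hm'
    rw [← hm', ← Category.assoc, ← Category.assoc, IsIso.inv_hom_id, Category.id_comp]

theorem IsRegularEpi.epi {A B : C} {f : A ⟶ B} (h : _root_.IsRegularEpi f) : Epi f := by
  obtain ⟨h⟩ := h
  exact h.epi

end Auxiliary

section MonoImage

variable [HasPullbacks C]

theorem mono_image_part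
    (hstab : ∀ {X Y Z : C} (f : X ⟶ Z) (g : Y ⟶ Z),
      _root_.IsRegularEpi f → _root_.IsRegularEpi (pullback.snd f g))
    {V A : C} (χ : V ⟶ A) [HasCoequalizer (pullback.fst χ χ) (pullback.snd χ χ)] :
    Mono (coequalizer.desc χ (pullback.condition)) := by
  have he : _root_.IsRegularEpi (coequalizer.π (pullback.fst χ χ) (pullback.snd χ χ)) :=
    ⟨coequalizerRegular _ _⟩
  have hem : coequalizer.π (pullback.fst χ χ) (pullback.snd χ χ) ≫
      coequalizer.desc χ (pullback.condition) = χ := coequalizer.π_desc _ _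
  -- notation
  obtain ⟨e, he'⟩ : ∃ e, e = coequalizer.π (pullback.fst χ χ) (pullback.snd χ χ) := ⟨_, rfl⟩
  obtain ⟨m, hm'⟩ : ∃ m, m = coequalizer.desc χ (pullback.condition (f := χ) (g := χ)) := ⟨_, rfl⟩
  rw [← he'] at he
  rw [← he', ← hm'] at hem
  rw [← hm']
  -- v : pullback χ m ⟶ pullback m m, a pullback of e
  have hv0 : (pullback.fst χ m ≫ e) ≫ m = pullback.snd χ m ≫ m := by
    rw [Category.assoc, hem]; exact pullback.condition
  have hφcond : pullback.fst χ m ≫ e =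
      pullback.lift (pullback.fst χ m ≫ e) (pullback.snd χ m) hv0 ≫ pullback.fst m m :=
    (pullback.lift_fst _ _ _).symm
  have hφ'cond : (pullback.fst e (pullback.fst m m)) ≫ χ =
      ((pullback.snd e (pullback.fst m m)) ≫ pullback.snd m m) ≫ m := by
    calc pullback.fst e (pullback.fst m m) ≫ χ
        = pullback.fst e (pullback.fst m m) ≫ e ≫ m := by rw [hem]
      _ = (pullback.fst e (pullback.fst m m) ≫ e) ≫ m := by rw [Category.assoc]
      _ = (pullback.snd e (pullback.fst m m) ≫ pullback.fst m m) ≫ m := by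
            rw [pullback.condition]
      _ = pullback.snd e (pullback.fst m m) ≫ pullback.fst m m ≫ m := by rw [Category.assoc]
      _ = pullback.snd e (pullback.fst m m) ≫ pullback.snd m m ≫ m := by
            rw [pullback.condition (f := m) (g := m)]
      _ = (pullback.snd e (pullback.fst m m) ≫ pullback.snd m m) ≫ m := by rw [Category.assoc]
  have hφiso : IsIso (pullback.lift (pullback.fst χ m)
      (pullback.lift (pullback.fst χ m ≫ e) (pullback.snd χ m) hv0) hφcond) := by
    refine ⟨pullback.lift (pullback.fst e (pullback.fst m m))
      (pullback.snd e (pullback.fst m m) ≫ pullback.snd m m) hφ'cond, ?_, ?_⟩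
    · apply pullback.hom_ext <;> simp
    · apply pullback.hom_ext
      · simp
      · apply pullback.hom_ext <;> simp [pullback.condition]
  have hv : Epi (pullback.lift (pullback.fst χ m ≫ e) (pullback.snd χ m) hv0) := by
    have heq : pullback.lift (pullback.fst χ m)
        (pullback.lift (pullback.fst χ m ≫ e) (pullback.snd χ m) hv0) hφcond ≫
        pullback.snd e (pullback.fst m m) =
        pullback.lift (pullback.fst χ m ≫ e) (pullback.snd χ m) hv0 :=
      pullback.lift_snd _ _ _
    rw [← heq]
    haveI := hφiso
    haveI : Epi (pullback.snd e (pullback.fst m m)) :=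
      (hstab e (pullback.fst m m) he).some.epi
    exact epi_comp _ _
  -- u : pullback χ χ ⟶ pullback χ m, a pullback of e
  have hucond : pullback.fst χ χ ≫ χ = (pullback.snd χ χ ≫ e) ≫ m := by
    rw [Category.assoc, hem]; exact pullback.condition
  have hψcond : pullback.snd χ χ ≫ e =
      pullback.lift (pullback.fst χ χ) (pullback.snd χ χ ≫ e) hucond ≫ pullback.snd χ m :=
    (pullback.lift_snd _ _ _).symm
  have hψ'cond : ((pullback.snd e (pullback.snd χ m)) ≫ pullback.fst χ m) ≫ χ =
      (pullback.fst e (pullback.snd χ m)) ≫ χ := by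
    calc (pullback.snd e (pullback.snd χ m) ≫ pullback.fst χ m) ≫ χ
        = pullback.snd e (pullback.snd χ m) ≫ pullback.fst χ m ≫ χ := by rw [Category.assoc]
      _ = pullback.snd e (pullback.snd χ m) ≫ pullback.snd χ m ≫ m := by
            rw [pullback.condition (f := χ) (g := m)]
      _ = (pullback.snd e (pullback.snd χ m) ≫ pullback.snd χ m) ≫ m := by rw [Category.assoc]
      _ = (pullback.fst e (pullback.snd χ m) ≫ e) ≫ m := by
            rw [pullback.condition (f := e) (g := pullback.snd χ m)]
      _ = pullback.fst e (pullback.snd χ m) ≫ e ≫ m := by rw [Category.assoc]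
      _ = pullback.fst e (pullback.snd χ m) ≫ χ := by rw [hem]
  have hψiso : IsIso (pullback.lift (pullback.snd χ χ)
      (pullback.lift (pullback.fst χ χ) (pullback.snd χ χ ≫ e) hucond) hψcond) := by
    refine ⟨pullback.lift (pullback.snd e (pullback.snd χ m) ≫ pullback.fst χ m)
      (pullback.fst e (pullback.snd χ m)) hψ'cond, ?_, ?_⟩
    · apply pullback.hom_ext <;> simp
    · apply pullback.hom_ext
      · simp
      · apply pullback.hom_ext <;> simp [pullback.condition]
  have hu : Epi (pullback.lift (pullback.fst χ χ) (pullback.snd χ χ ≫ e) hucond) := by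
    have heq : pullback.lift (pullback.snd χ χ)
        (pullback.lift (pullback.fst χ χ) (pullback.snd χ χ ≫ e) hucond) hψcond ≫
        pullback.snd e (pullback.snd χ m) =
        pullback.lift (pullback.fst χ χ) (pullback.snd χ χ ≫ e) hucond :=
      pullback.lift_snd _ _ _
    rw [← heq]
    haveI := hψiso
    haveI : Epi (pullback.snd e (pullback.snd χ m)) :=
      (hstab e (pullback.snd χ m) he).some.epi
    exact epi_comp _ _
  -- conclusion
  have hq : pullback.fst m m = pullback.snd m m := by
    haveI := hu; haveI := hv
    have key : (pullback.lift (pullback.fst χ χ) (pullback.snd χ χ ≫ e) hucond ≫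
        pullback.lift (pullback.fst χ m ≫ e) (pullback.snd χ m) hv0) ≫ pullback.fst m m =
        (pullback.lift (pullback.fst χ χ) (pullback.snd χ χ ≫ e) hucond ≫
        pullback.lift (pullback.fst χ m ≫ e) (pullback.snd χ m) hv0) ≫ pullback.snd m m := by
      simp only [Category.assoc, pullback.lift_fst, pullback.lift_snd,
        pullback.lift_fst_assoc, pullback.lift_snd_assoc]
      rw [he']
      exact coequalizer.condition _ _
    exact (cancel_epi _).mp key
  constructor
  intro T' a b hab
  have h1 := pullback.lift_fst a b hab
  have h2 := pullback.lift_snd a b hab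
  calc a = pullback.lift a b hab ≫ pullback.fst m m := h1.symm
    _ = pullback.lift a b hab ≫ pullback.snd m m := by rw [hq]
    _ = b := h2

end MonoImage

section Transfer

variable [HasPullbacks C] [HasBinaryProducts C]

/-- The canonical comparison `pullback g π₁ ⟶ X ⨯ Y`. -/
private noncomputable def eP {Y X : C} (g : X ⟶ Y) : pullback g (prod.fst : Y ⨯ Y ⟶ Y) ⟶ X ⨯ Y :=
  prod.lift (pullback.fst g prod.fst) (pullback.snd g prod.fst ≫ prod.snd)

private noncomputable def ePinv {Y X : C} (g : X ⟶ Y) : X ⨯ Y ⟶ pullback g (prod.fst : Y ⨯ Y ⟶ Y) :=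
  pullback.lift prod.fst (prod.lift (prod.fst ≫ g) prod.snd) (by simp)

private lemma eP_ePinv {Y X : C} (g : X ⟶ Y) : eP g ≫ ePinv g = 𝟙 _ := by
  apply pullback.hom_ext
  · simp [eP, ePinv]
  · apply Limits.prod.hom_ext
    · simp [eP, ePinv, pullback.condition]
    · simp [eP, ePinv]

private lemma ePinv_eP {Y X : C} (g : X ⟶ Y) : ePinv g ≫ eP g = 𝟙 _ := by
  apply Limits.prod.hom_ext <;> simp [eP, ePinv]

private noncomputable def toP {Y X W : C} (g : X ⟶ Y) (h : W ⟶ X) :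
    W ⨯ Y ⟶ pullback g (prod.fst : Y ⨯ Y ⟶ Y) :=
  pullback.lift (prod.fst ≫ h) (prod.lift (prod.fst ≫ h ≫ g) prod.snd) (by simp)

private noncomputable def iQ {Y X W : C} (g : X ⟶ Y) (h : W ⟶ X) :
    W ⨯ Y ⟶ pullback h (pullback.fst g (prod.fst : Y ⨯ Y ⟶ Y)) :=
  pullback.lift prod.fst (toP g h) (by simp [toP])

private noncomputable def iQinv {Y X W : C} (g : X ⟶ Y) (h : W ⟶ X) :
    pullback h (pullback.fst g (prod.fst : Y ⨯ Y ⟶ Y)) ⟶ W ⨯ Y :=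
  prod.lift (pullback.fst h (pullback.fst g prod.fst))
    (pullback.snd h (pullback.fst g prod.fst) ≫ pullback.snd g prod.fst ≫ prod.snd)

private lemma iQ_iQinv {Y X W : C} (g : X ⟶ Y) (h : W ⟶ X) : iQ g h ≫ iQinv g h = 𝟙 _ := by
  apply Limits.prod.hom_ext <;> simp [iQ, iQinv, toP]

private lemma iQinv_iQ {Y X W : C} (g : X ⟶ Y) (h : W ⟶ X) : iQinv g h ≫ iQ g h = 𝟙 _ := by
  apply pullback.hom_ext
  · simp [iQ, iQinv]
  · apply pullback.hom_ext
    · simp [iQ, iQinv, toP, pullback.condition]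
    · apply Limits.prod.hom_ext
      · simp [iQ, iQinv, toP, pullback.condition, pullback.condition_assoc]
      · simp [iQ, iQinv, toP]

private lemma toP_eP {Y X W : C} (g : X ⟶ Y) (h : W ⟶ X) :
    toP g h ≫ eP g = prod.map h (𝟙 Y) := by
  apply Limits.prod.hom_ext <;> simp [toP, eP]

private lemma sect_eP {Y X : C} (g : X ⟶ Y) (σY : Y ⟶ Y ⨯ Y)
    (w : 𝟙 X ≫ g = (g ≫ σY) ≫ prod.fst) :
    pullback.lift (𝟙 X) (g ≫ σY) w ≫ eP g = prod.lift (𝟙 X) (g ≫ σY ≫ prod.snd) := by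
  apply Limits.prod.hom_ext <;> simp [eP]

private theorem jse_transfer {Y X W : C} (g : X ⟶ Y) (h : W ⟶ X) (σY : Y ⟶ Y ⨯ Y)
    (w : 𝟙 X ≫ g = (g ≫ σY) ≫ prod.fst) :
    JointlyStronglyEpi (pullback.snd h (pullback.fst g (prod.fst : Y ⨯ Y ⟶ Y)))
        (pullback.lift (𝟙 X) (g ≫ σY) w) ↔
      JointlyStronglyEpi (prod.map h (𝟙 Y)) (prod.lift (𝟙 X) (g ≫ σY ≫ prod.snd)) := by
  haveI : IsIso (eP g) := ⟨ePinv g, eP_ePinv g, ePinv_eP g⟩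
  haveI : IsIso (ePinv g) := ⟨eP g, ePinv_eP g, eP_ePinv g⟩
  constructor
  · intro hJ
    refine JointlyStronglyEpi.factor (hJ.comp_iso (eP g)) (iQinv g h) (𝟙 _) ?_ ?_
    · calc iQinv g h ≫ prod.map h (𝟙 Y)
          = iQinv g h ≫ toP g h ≫ eP g := by rw [toP_eP]
        _ = iQinv g h ≫ (iQ g h ≫ pullback.snd h (pullback.fst g prod.fst)) ≫ eP g := by
              simp only [iQ, pullback.lift_snd]
        _ = (iQinv g h ≫ iQ g h) ≫ pullback.snd h (pullback.fst g prod.fst) ≫ eP g := by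
              simp only [Category.assoc]
        _ = pullback.snd h (pullback.fst g prod.fst) ≫ eP g := by
              rw [iQinv_iQ, Category.id_comp]
    · rw [Category.id_comp, sect_eP]
  · intro hJ
    refine JointlyStronglyEpi.factor (hJ.comp_iso (ePinv g)) (iQ g h) (𝟙 _) ?_ ?_
    · calc iQ g h ≫ pullback.snd h (pullback.fst g prod.fst)
          = toP g h := by simp only [iQ, pullback.lift_snd]
        _ = toP g h ≫ 𝟙 _ := by rw [Category.comp_id]
        _ = toP g h ≫ eP g ≫ ePinv g := by rw [eP_ePinv]
        _ = (toP g h ≫ eP g) ≫ ePinv g := by rw [Category.assoc]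
        _ = prod.map h (𝟙 Y) ≫ ePinv g := by rw [toP_eP]
    · rw [Category.id_comp]
      calc pullback.lift (𝟙 X) (g ≫ σY) w
          = pullback.lift (𝟙 X) (g ≫ σY) w ≫ 𝟙 _ := by rw [Category.comp_id]
        _ = pullback.lift (𝟙 X) (g ≫ σY) w ≫ eP g ≫ ePinv g := by rw [eP_ePinv]
        _ = (pullback.lift (𝟙 X) (g ≫ σY) w ≫ eP g) ≫ ePinv g := by rw [Category.assoc]
        _ = prod.lift (𝟙 X) (g ≫ σY ≫ prod.snd) ≫ ePinv g := by rw [sect_eP]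

end Transfer

section MainParts

variable [HasFiniteLimits C] [HasZeroMorphisms C]

/-- The product-form of strong unitality. -/
def IsSU (Y : C) : Prop := ∀ ⦃X W : C⦄ (g : X ⟶ Y) (h : W ⟶ X),
  JointlyStronglyEpi (prod.map h (𝟙 Y)) (prod.lift (𝟙 X) g)

/-- The product-form of unitality. -/
def IsU (Y : C) : Prop := ∀ ⦃X W : C⦄ (h : W ⟶ X),
  JointlyStronglyEpi (prod.map h (𝟙 Y)) (prod.lift (𝟙 X) (0 : X ⟶ Y))

theorem stronglyUnitalObject_iff (Y : C) : StronglyUnitalObject Y ↔ IsSU Y := by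
  constructor
  · intro hs X W g h
    have := (jse_transfer g h (prod.lift (𝟙 Y) (𝟙 Y)) (by simp)).mp (hs g h)
    simpa using this
  · intro hs X g W h
    refine (jse_transfer g h (prod.lift (𝟙 Y) (𝟙 Y)) (by simp)).mpr ?_
    simpa using hs g h

theorem unitalObject_iff (Y : C) : UnitalObject Y ↔ IsU Y := by
  constructor
  · intro hs X W h
    have := (jse_transfer (0 : X ⟶ Y) h (prod.lift (𝟙 Y) 0) (by simp)).mp (hs 0 h)
    simpa using this
  · intro hs X g W h
    refine (jse_transfer g h (prod.lift (𝟙 Y) 0) (by simp)).mpr ?_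
    simpa using hs h

theorem isRegularEpi_of_factorizations
    (hstab : ∀ {X Y Z : C} (f : X ⟶ Z) (g : Y ⟶ Z),
      _root_.IsRegularEpi f → _root_.IsRegularEpi (pullback.snd f g))
    {V A : C} (χ : V ⟶ A) [HasCoequalizer (pullback.fst χ χ) (pullback.snd χ χ)]
    (H : ∀ {M : C} (m : M ⟶ A), Mono m → (∃ c : V ⟶ M, c ≫ m = χ) → IsIso m) :
    _root_.IsRegularEpi χ := by
  have hmono := mono_image_part hstab χ
  haveI : IsIso (coequalizer.desc χ (pullback.condition)) :=
    H _ hmono ⟨coequalizer.π _ _, coequalizer.π_desc _ _⟩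
  have hre : _root_.IsRegularEpi (coequalizer.π (pullback.fst χ χ) (pullback.snd χ χ) ≫
      coequalizer.desc χ (pullback.condition)) :=
    IsRegularEpi.comp_isIso ⟨coequalizerRegular _ _⟩ _
  rwa [coequalizer.π_desc] at hre

theorem subtractive_of_isSU
    (hcoeq : ∀ {X Y : C} (f : X ⟶ Y),
      HasCoequalizer (pullback.fst f f) (pullback.snd f f))
    (hstab : ∀ {X Y Z : C} (f : X ⟶ Z) (g : Y ⟶ Z),
      _root_.IsRegularEpi f → _root_.IsRegularEpi (pullback.snd f g))
    {Y : C} (hsu : IsSU Y) : SubtractiveObject Y := by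
  intro X Z s f g t hsf htg htf
  haveI := hcoeq (prod.lift (pullback.fst f f) (pullback.snd f f ≫ g))
  have hccond : (prod.fst ≫ t) ≫ f = (prod.snd ≫ t) ≫ f := by
    simp [htf]
  have hc : (pullback.lift (prod.fst ≫ t) (prod.snd ≫ t) hccond : Y ⨯ Y ⟶ pullback f f) ≫
      prod.lift (pullback.fst f f) (pullback.snd f f ≫ g) = prod.map t (𝟙 Y) := by
    apply Limits.prod.hom_ext <;> simp [htg]
  have hΔ : (pullback.lift (𝟙 Z) (𝟙 Z) rfl) ≫
      prod.lift (pullback.fst f f) (pullback.snd f f ≫ g) = prod.lift (𝟙 Z) g := by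
    apply Limits.prod.hom_ext <;> simp
  have hre : _root_.IsRegularEpi (prod.lift (pullback.fst f f) (pullback.snd f f ≫ g)) := by
    refine isRegularEpi_of_factorizations hstab _ ?_
    rintro M m hm ⟨cm, hcm⟩
    refine hsu g t m hm
      ⟨pullback.lift (prod.fst ≫ t) (prod.snd ≫ t) hccond ≫ cm, ?_⟩
      ⟨pullback.lift (𝟙 Z) (𝟙 Z) rfl ≫ cm, ?_⟩
    · rw [Category.assoc, hcm, hc]
    · rw [Category.assoc, hcm, hΔ]
  have hp := hstab (prod.lift (pullback.fst f f) (pullback.snd f f ≫ g))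
    (prod.lift s (0 : X ⟶ Y)) hre
  -- the comparison isomorphism between `kernel g` and the pullback
  have hKcond : (kernel.ι g ≫ f ≫ s) ≫ f = kernel.ι g ≫ f := by
    simp [hsf]
  have hωcond : (pullback.lift (kernel.ι g ≫ f ≫ s) (kernel.ι g) hKcond) ≫
      prod.lift (pullback.fst f f) (pullback.snd f f ≫ g) =
      (kernel.ι g ≫ f) ≫ prod.lift s (0 : X ⟶ Y) := by
    apply Limits.prod.hom_ext
    · simp
    · simp [kernel.condition]
  have hψ0 : (pullback.fst (prod.lift (pullback.fst f f) (pullback.snd f f ≫ g))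
      (prod.lift s 0) ≫ pullback.snd f f) ≫ g = 0 := by
    calc (pullback.fst (prod.lift (pullback.fst f f) (pullback.snd f f ≫ g))
          (prod.lift s 0) ≫ pullback.snd f f) ≫ g
        = pullback.fst (prod.lift (pullback.fst f f) (pullback.snd f f ≫ g))
            (prod.lift s 0) ≫
            (prod.lift (pullback.fst f f) (pullback.snd f f ≫ g) ≫ prod.snd) := by simp
      _ = (pullback.fst (prod.lift (pullback.fst f f) (pullback.snd f f ≫ g))
            (prod.lift s 0) ≫ prod.lift (pullback.fst f f) (pullback.snd f f ≫ g)) ≫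
            prod.snd := by rw [Category.assoc]
      _ = (pullback.snd (prod.lift (pullback.fst f f) (pullback.snd f f ≫ g))
            (prod.lift s 0) ≫ prod.lift s 0) ≫ prod.snd := by rw [pullback.condition]
      _ = 0 := by simp
  -- A1
  have hA1 : pullback.fst (prod.lift (pullback.fst f f) (pullback.snd f f ≫ g))
      (prod.lift s (0 : X ⟶ Y)) ≫ pullback.fst f f =
      pullback.snd (prod.lift (pullback.fst f f) (pullback.snd f f ≫ g))
      (prod.lift s (0 : X ⟶ Y)) ≫ s := by
    calc pullback.fst (prod.lift (pullback.fst f f) (pullback.snd f f ≫ g))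
          (prod.lift s (0 : X ⟶ Y)) ≫ pullback.fst f f
        = pullback.fst (prod.lift (pullback.fst f f) (pullback.snd f f ≫ g))
            (prod.lift s (0 : X ⟶ Y)) ≫
            (prod.lift (pullback.fst f f) (pullback.snd f f ≫ g) ≫ prod.fst) := by simp
      _ = (pullback.fst (prod.lift (pullback.fst f f) (pullback.snd f f ≫ g))
            (prod.lift s (0 : X ⟶ Y)) ≫
            prod.lift (pullback.fst f f) (pullback.snd f f ≫ g)) ≫ prod.fst := by
              rw [Category.assoc]
      _ = (pullback.snd (prod.lift (pullback.fst f f) (pullback.snd f f ≫ g))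
            (prod.lift s (0 : X ⟶ Y)) ≫ prod.lift s (0 : X ⟶ Y)) ≫ prod.fst := by
              rw [pullback.condition]
      _ = pullback.snd (prod.lift (pullback.fst f f) (pullback.snd f f ≫ g))
            (prod.lift s (0 : X ⟶ Y)) ≫ s := by simp
  have hωψ : pullback.lift (pullback.lift (kernel.ι g ≫ f ≫ s) (kernel.ι g) hKcond)
        (kernel.ι g ≫ f) hωcond ≫ kernel.lift g
        (pullback.fst _ _ ≫ pullback.snd f f) hψ0 = 𝟙 _ := by
    rw [← cancel_mono (kernel.ι g)]
    simp
  have hψω : kernel.lift g (pullback.fst _ _ ≫ pullback.snd f f) hψ0 ≫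
      pullback.lift (pullback.lift (kernel.ι g ≫ f ≫ s) (kernel.ι g) hKcond)
        (kernel.ι g ≫ f) hωcond = 𝟙 _ := by
    have hk : kernel.lift g (pullback.fst _ _ ≫ pullback.snd f f) hψ0 ≫ kernel.ι g =
        pullback.fst _ _ ≫ pullback.snd f f := kernel.lift_ι _ _ _
    have hsnd : pullback.fst (prod.lift (pullback.fst f f) (pullback.snd f f ≫ g))
        (prod.lift s (0 : X ⟶ Y)) ≫ pullback.snd f f ≫ f =
        pullback.snd (prod.lift (pullback.fst f f) (pullback.snd f f ≫ g))
        (prod.lift s (0 : X ⟶ Y)) := by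
      calc pullback.fst (prod.lift (pullback.fst f f) (pullback.snd f f ≫ g))
            (prod.lift s (0 : X ⟶ Y)) ≫ pullback.snd f f ≫ f
          = pullback.fst (prod.lift (pullback.fst f f) (pullback.snd f f ≫ g))
              (prod.lift s (0 : X ⟶ Y)) ≫ pullback.fst f f ≫ f := by
                rw [← pullback.condition (f := f) (g := f)]
        _ = (pullback.fst (prod.lift (pullback.fst f f) (pullback.snd f f ≫ g))
              (prod.lift s (0 : X ⟶ Y)) ≫ pullback.fst f f) ≫ f := by
                rw [Category.assoc]
        _ = (pullback.snd (prod.lift (pullback.fst f f) (pullback.snd f f ≫ g))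
              (prod.lift s (0 : X ⟶ Y)) ≫ s) ≫ f := by rw [hA1]
        _ = pullback.snd (prod.lift (pullback.fst f f) (pullback.snd f f ≫ g))
              (prod.lift s (0 : X ⟶ Y)) := by rw [Category.assoc, hsf, Category.comp_id]
    have hsnd2 : pullback.fst (prod.lift (pullback.fst f f) (pullback.snd f f ≫ g))
        (prod.lift s (0 : X ⟶ Y)) ≫ pullback.snd f f ≫ f ≫ s =
        pullback.snd (prod.lift (pullback.fst f f) (pullback.snd f f ≫ g))
        (prod.lift s (0 : X ⟶ Y)) ≫ s := by
      have := congrArg (fun q => q ≫ s) hsnd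
      simpa using this
    apply pullback.hom_ext
    · apply pullback.hom_ext
      · simp only [Category.assoc, pullback.lift_fst, pullback.lift_snd, Category.id_comp]
        rw [← Category.assoc, hk, Category.assoc]
        rw [hsnd2, ← hA1]
      · simp only [Category.assoc, pullback.lift_fst, pullback.lift_snd, Category.id_comp]
        exact hk
    · simp only [Category.assoc, pullback.lift_snd, Category.id_comp]
      rw [← Category.assoc, hk, Category.assoc]
      exact hsnd
  haveI : IsIso (pullback.lift (pullback.lift (kernel.ι g ≫ f ≫ s) (kernel.ι g) hKcond)
      (kernel.ι g ≫ f) hωcond) :=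
    ⟨kernel.lift g (pullback.fst _ _ ≫ pullback.snd f f) hψ0, hωψ, hψω⟩
  have hfinal : kernel.ι g ≫ f =
      pullback.lift (pullback.lift (kernel.ι g ≫ f ≫ s) (kernel.ι g) hKcond)
        (kernel.ι g ≫ f) hωcond ≫
      pullback.snd (prod.lift (pullback.fst f f) (pullback.snd f f ≫ g))
        (prod.lift s (0 : X ⟶ Y)) := (pullback.lift_snd _ _ _).symm
  rw [hfinal]
  exact hp.isIso_comp _

theorem isSU_of_isU_subtractive {Y : C} (hu : IsU Y) (hsub : SubtractiveObject Y) :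
    IsSU Y := by
  intro X W g h M m hm h1 h2
  obtain ⟨a, ha⟩ := h1
  obtain ⟨b, hb⟩ := h2
  have hspan1 : b ≫ (m ≫ prod.fst) = 𝟙 X := by
    rw [← Category.assoc, hb]; simp
  have ht'm : (prod.lift (0 : Y ⟶ W) (𝟙 Y) ≫ a) ≫ m = prod.lift (0 : Y ⟶ X) (𝟙 Y) := by
    rw [Category.assoc, ha]
    apply Limits.prod.hom_ext <;> simp
  have hspan2 : (prod.lift (0 : Y ⟶ W) (𝟙 Y) ≫ a) ≫ (m ≫ prod.snd) = 𝟙 Y := by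
    rw [← Category.assoc, ht'm]; simp
  have hspan3 : (prod.lift (0 : Y ⟶ W) (𝟙 Y) ≫ a) ≫ (m ≫ prod.fst) = 0 := by
    rw [← Category.assoc, ht'm]; simp
  have hρ := hsub b (m ≫ prod.fst) (m ≫ prod.snd) _ hspan1 hspan2 hspan3
  haveI : CategoryTheory.IsRegularEpi (kernel.ι (m ≫ prod.snd) ≫ m ≫ prod.fst) := ⟨hρ⟩
  haveI : Mono m := hm
  have hsq : CommSq (kernel.ι (m ≫ prod.snd)) (kernel.ι (m ≫ prod.snd) ≫ m ≫ prod.fst)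
      m (prod.lift (𝟙 X) (0 : X ⟶ Y)) := by
    constructor
    apply Limits.prod.hom_ext
    · simp
    · rw [Category.assoc, kernel.condition]; simp
  exact hu h m hm ⟨a, ha⟩ ⟨hsq.lift, hsq.fac_right⟩

end MainParts

/-- In a pointed regular category, an object is strongly unital iff it is
unital and subtractive. -/
theorem statement14 [HasFiniteLimits C] [HasZeroObject C] [HasZeroMorphisms C]
    (hcoeq : ∀ {X Y : C} (f : X ⟶ Y),
      HasCoequalizer (pullback.fst f f) (pullback.snd f f))
    (hstab : ∀ {X Y Z : C} (f : X ⟶ Z) (g : Y ⟶ Z),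
      _root_.IsRegularEpi f → _root_.IsRegularEpi (pullback.snd f g))
    (Y : C) :
    StronglyUnitalObject Y ↔ UnitalObject Y ∧ SubtractiveObject Y := by
  constructor
  · intro hsu
    have hsu' := (stronglyUnitalObject_iff Y).mp hsu
    refine ⟨(unitalObject_iff Y).mpr ?_, subtractive_of_isSU hcoeq hstab hsu'⟩
    intro X W h
    exact hsu' 0 h
  · rintro ⟨hU, hsub⟩
    exact (stronglyUnitalObject_iff Y).mpr
      (isSU_of_isU_subtractive ((unitalObject_iff Y).mp hU) hsub)
end

section
/- Let C be a pointed regular category with binary coproducts and Y an object of C. Then Y is a subtractive object if and only if for every morphism f : X → Y, the composite δ_f = [1_X, 0] ∘ ker([f, 1_Y]) : Ker([f, 1_Y]) → X is a regular epimorphism, where [f, 1_Y] : X + Y → Y and [1_X, 0] : X + Y → X denote the morphisms induced on the coproduct. -/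
open CategoryTheory CategoryTheory.Limits

universe v u

variable {C : Type u} [Category.{v} C]

/-- A regular epi followed by an isomorphism is a regular epi. -/
lemma isRegularEpi_comp_iso {A B D : C} (e : A ⟶ B) (m : B ⟶ D)
    (he : _root_.IsRegularEpi e) (hm : IsIso m) : _root_.IsRegularEpi (e ≫ m) := by
  obtain ⟨re⟩ := he
  refine ⟨⟨re.W, re.left, re.right, by rw [reassoc_of% re.w], ?_⟩⟩
  refine Cofork.IsColimit.mk _ (fun s => inv m ≫ re.isColimit.desc
      (Cofork.ofπ s.π (by simpa using s.condition))) ?_ ?_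
  · intro s
    have h1 := Cofork.IsColimit.π_desc (t := Cofork.ofπ s.π
      (by simpa using s.condition)) re.isColimit
    simp only [Cofork.π_ofπ] at h1
    show (e ≫ m) ≫ inv m ≫ _ = s.π
    simp [h1]
  · intro s u hu
    have hu' : e ≫ m ≫ u = s.π := by simpa using hu
    have h1 := Cofork.IsColimit.π_desc (t := Cofork.ofπ s.π
      (by simpa using s.condition)) re.isColimit
    simp only [Cofork.π_ofπ] at h1
    have h2 : m ≫ u = re.isColimit.desc (Cofork.ofπ s.π
        (by simpa using s.condition)) := by
      refine Cofork.IsColimit.hom_ext re.isColimit ?_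
      simp only [Cofork.π_ofπ, h1, hu']
    show u = inv m ≫ _
    rw [← h2]
    simp

/-- In a regular category, if a composite `k ≫ h` is a regular epi, then so
is `h`. -/
lemma isRegularEpi_of_comp [HasFiniteLimits C]
    (hcoeq : ∀ {X Y : C} (f : X ⟶ Y),
      HasCoequalizer (pullback.fst f f) (pullback.snd f f))
    (hstab : ∀ {X Y Z : C} (f : X ⟶ Z) (g : Y ⟶ Z),
      _root_.IsRegularEpi f → _root_.IsRegularEpi (pullback.snd f g))
    {D A B : C} (k : D ⟶ A) (h : A ⟶ B) (hk : _root_.IsRegularEpi (k ≫ h)) :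
    _root_.IsRegularEpi h := by
  haveI := hcoeq h
  set c : A ⟶ coequalizer (pullback.fst h h) (pullback.snd h h) :=
    coequalizer.π _ _ with hc
  set m := coequalizer.desc h pullback.condition with hmdef
  have hcm : c ≫ m = h := coequalizer.π_desc _ _
  have hcre : _root_.IsRegularEpi c := ⟨coequalizerRegular _ _⟩
  -- first comparison map
  have hcomm1 : (pullback.fst h h ≫ c) ≫ m = pullback.snd h h ≫ h := by
    rw [Category.assoc, hcm, pullback.condition]
  set map1 : pullback h h ⟶ pullback m h :=
    pullback.lift (pullback.fst h h ≫ c) (pullback.snd h h) hcomm1 with hm1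
  have hmap1 : Epi map1 := by
    have comm : pullback.fst h h ≫ c = map1 ≫ pullback.fst m h := by simp [pullback.lift_fst, pullback.lift_snd, pullback.lift_fst_assoc, pullback.lift_snd_assoc, hm1]
    set e1 : pullback h h ⟶ pullback c (pullback.fst m h) :=
      pullback.lift (pullback.fst h h) map1 comm with he1
    set i1 : pullback c (pullback.fst m h) ⟶ pullback h h :=
      pullback.lift (pullback.fst c (pullback.fst m h))
        (pullback.snd c (pullback.fst m h) ≫ pullback.snd m h)
        (by
          calc pullback.fst c (pullback.fst m h) ≫ h
              = pullback.fst c (pullback.fst m h) ≫ c ≫ m := by rw [hcm]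
            _ = (pullback.fst c (pullback.fst m h) ≫ c) ≫ m := by
                rw [Category.assoc]
            _ = (pullback.snd c (pullback.fst m h) ≫ pullback.fst m h) ≫ m := by
                rw [pullback.condition]
            _ = pullback.snd c (pullback.fst m h) ≫ pullback.fst m h ≫ m := by
                rw [Category.assoc]
            _ = pullback.snd c (pullback.fst m h) ≫ pullback.snd m h ≫ h := by
                rw [pullback.condition]
            _ = (pullback.snd c (pullback.fst m h) ≫ pullback.snd m h) ≫ h := by
                rw [Category.assoc]) with hi1
    haveI : IsIso e1 := by
      refine ⟨i1, ?_, ?_⟩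
      · apply pullback.hom_ext <;> simp [pullback.lift_fst, pullback.lift_snd, pullback.lift_fst_assoc, pullback.lift_snd_assoc, he1, hi1, hm1]
      · apply pullback.hom_ext
        · simp [pullback.lift_fst, pullback.lift_snd, pullback.lift_fst_assoc, pullback.lift_snd_assoc, he1, hi1]
        · apply pullback.hom_ext
          · simp [pullback.lift_fst, pullback.lift_snd, pullback.lift_fst_assoc, pullback.lift_snd_assoc, he1, hi1, hm1, pullback.condition]
          · simp [pullback.lift_fst, pullback.lift_snd, pullback.lift_fst_assoc, pullback.lift_snd_assoc, he1, hi1, hm1]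
    have hsnd : _root_.IsRegularEpi (pullback.snd c (pullback.fst m h)) :=
      hstab _ _ hcre
    obtain ⟨re⟩ := hsnd
    have : map1 = e1 ≫ pullback.snd c (pullback.fst m h) := by simp [pullback.lift_fst, pullback.lift_snd, pullback.lift_fst_assoc, pullback.lift_snd_assoc, he1]
    rw [this]
    haveI := isRegularEpi_of_regularEpi re; exact epi_comp _ _
  -- second comparison map
  have hcomm2 : pullback.fst m h ≫ m = (pullback.snd m h ≫ c) ≫ m := by
    calc pullback.fst m h ≫ m = pullback.snd m h ≫ h := pullback.condition
      _ = pullback.snd m h ≫ c ≫ m := by rw [hcm]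
      _ = (pullback.snd m h ≫ c) ≫ m := by rw [Category.assoc]
  set map2 : pullback m h ⟶ pullback m m :=
    pullback.lift (pullback.fst m h) (pullback.snd m h ≫ c) hcomm2 with hm2
  have hmap2 : Epi map2 := by
    have comm : pullback.snd m h ≫ c = map2 ≫ pullback.snd m m := by simp [pullback.lift_fst, pullback.lift_snd, pullback.lift_fst_assoc, pullback.lift_snd_assoc, hm2]
    set e2 : pullback m h ⟶ pullback c (pullback.snd m m) :=
      pullback.lift (pullback.snd m h) map2 comm with he2
    set i2 : pullback c (pullback.snd m m) ⟶ pullback m h :=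
      pullback.lift (pullback.snd c (pullback.snd m m) ≫ pullback.fst m m)
        (pullback.fst c (pullback.snd m m))
        (by
          calc (pullback.snd c (pullback.snd m m) ≫ pullback.fst m m) ≫ m
              = pullback.snd c (pullback.snd m m) ≫ pullback.fst m m ≫ m := by
                rw [Category.assoc]
            _ = pullback.snd c (pullback.snd m m) ≫ pullback.snd m m ≫ m := by
                rw [pullback.condition]
            _ = (pullback.snd c (pullback.snd m m) ≫ pullback.snd m m) ≫ m := by
                rw [Category.assoc]
            _ = (pullback.fst c (pullback.snd m m) ≫ c) ≫ m := by
                rw [pullback.condition]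
            _ = pullback.fst c (pullback.snd m m) ≫ c ≫ m := by
                rw [Category.assoc]
            _ = pullback.fst c (pullback.snd m m) ≫ h := by rw [hcm]) with hi2
    haveI : IsIso e2 := by
      refine ⟨i2, ?_, ?_⟩
      · apply pullback.hom_ext <;> simp [pullback.lift_fst, pullback.lift_snd, pullback.lift_fst_assoc, pullback.lift_snd_assoc, he2, hi2, hm2]
      · apply pullback.hom_ext
        · simp [pullback.lift_fst, pullback.lift_snd, pullback.lift_fst_assoc, pullback.lift_snd_assoc, he2, hi2]
        · apply pullback.hom_ext
          · simp [pullback.lift_fst, pullback.lift_snd, pullback.lift_fst_assoc, pullback.lift_snd_assoc, he2, hi2, hm2]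
          · simp [pullback.lift_fst, pullback.lift_snd, pullback.lift_fst_assoc, pullback.lift_snd_assoc, he2, hi2, hm2, pullback.condition]
    have hsnd : _root_.IsRegularEpi (pullback.snd c (pullback.snd m m)) :=
      hstab _ _ hcre
    obtain ⟨re⟩ := hsnd
    have : map2 = e2 ≫ pullback.snd c (pullback.snd m m) := by simp [pullback.lift_fst, pullback.lift_snd, pullback.lift_fst_assoc, pullback.lift_snd_assoc, he2]
    rw [this]
    haveI := isRegularEpi_of_regularEpi re; exact epi_comp _ _
  -- m is a mono
  have hfstsnd : pullback.fst m m = pullback.snd m m := by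
    have hθ : Epi (map1 ≫ map2) := epi_comp _ _
    have h1 : (map1 ≫ map2) ≫ pullback.fst m m =
        (map1 ≫ map2) ≫ pullback.snd m m := by
      simp only [Category.assoc, hm2, hm1, pullback.lift_fst, pullback.lift_snd,
        pullback.lift_fst_assoc, pullback.lift_snd_assoc]
      exact coequalizer.condition _ _
    exact (cancel_epi (map1 ≫ map2)).mp h1
  haveI hmono : Mono m := by
    constructor
    intro T u v huv
    have := pullback.lift_fst u v huv
    calc u = pullback.lift u v huv ≫ pullback.fst m m := by simp [pullback.lift_fst, pullback.lift_snd, pullback.lift_fst_assoc, pullback.lift_snd_assoc]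
      _ = pullback.lift u v huv ≫ pullback.snd m m := by rw [hfstsnd]
      _ = v := by simp [pullback.lift_fst, pullback.lift_snd, pullback.lift_fst_assoc, pullback.lift_snd_assoc]
  -- m is a strong epi, hence iso
  obtain ⟨rkh⟩ := hk
  haveI : CategoryTheory.IsRegularEpi (k ≫ h) := ⟨⟨rkh⟩⟩
  haveI : StrongEpi ((k ≫ c) ≫ m) := by
    rw [Category.assoc, hcm]; infer_instance
  haveI : StrongEpi m := strongEpi_of_strongEpi (k ≫ c) m
  haveI : IsIso m := isIso_of_mono_of_strongEpi m
  rw [← hcm]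
  exact isRegularEpi_comp_iso c m hcre this

/-- In a pointed regular category with binary coproducts, an object `Y` is
subtractive iff for every `f : X ⟶ Y` the composite
`δ_f = [1_X, 0] ∘ ker([f, 1_Y])` is a regular epimorphism. -/
theorem statement15 [HasFiniteLimits C] [HasZeroObject C] [HasZeroMorphisms C]
    [HasBinaryCoproducts C]
    (hcoeq : ∀ {X Y : C} (f : X ⟶ Y),
      HasCoequalizer (pullback.fst f f) (pullback.snd f f))
    (hstab : ∀ {X Y Z : C} (f : X ⟶ Z) (g : Y ⟶ Z),
      _root_.IsRegularEpi f → _root_.IsRegularEpi (pullback.snd f g))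
    (Y : C) :
    SubtractiveObject Y ↔
      ∀ ⦃X : C⦄ (f : X ⟶ Y),
        _root_.IsRegularEpi (kernel.ι (coprod.desc f (𝟙 Y)) ≫
          coprod.desc (𝟙 X) (0 : Y ⟶ X)) := by
  constructor
  · intro hsub X f
    exact hsub coprod.inl (coprod.desc (𝟙 X) (0 : Y ⟶ X)) (coprod.desc f (𝟙 Y))
      coprod.inr (by simp [coprod.inl_desc, coprod.inr_desc, coprod.inl_desc_assoc, coprod.inr_desc_assoc]) (by simp [coprod.inl_desc, coprod.inr_desc, coprod.inl_desc_assoc, coprod.inr_desc_assoc]) (by simp [coprod.inl_desc, coprod.inr_desc, coprod.inl_desc_assoc, coprod.inr_desc_assoc])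
  · intro hδ X Z s f g t hs ht htf
    set g' : X ⨿ Y ⟶ Y := coprod.desc (s ≫ g) (𝟙 Y) with hg'
    set φ : X ⨿ Y ⟶ Z := coprod.desc s t with hφ
    have hφg : φ ≫ g = g' := by
      apply coprod.hom_ext <;> simp [hφ, hg', ht]
    have hφf : φ ≫ f = coprod.desc (𝟙 X) (0 : Y ⟶ X) := by
      apply coprod.hom_ext <;> simp [hφ, hs, htf]
    set k : kernel g' ⟶ kernel g :=
      kernel.lift g (kernel.ι g' ≫ φ)
        (by rw [Category.assoc, hφg, kernel.condition]) with hk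
    have hfac : kernel.ι g' ≫ coprod.desc (𝟙 X) (0 : Y ⟶ X) =
        k ≫ (kernel.ι g ≫ f) := by
      have hkι : k ≫ kernel.ι g = kernel.ι g' ≫ φ := by
        simp [hk]
      rw [← hφf, ← Category.assoc, ← hkι, Category.assoc]
    exact isRegularEpi_of_comp hcoeq hstab k (kernel.ι g ≫ f)
      (hfac ▸ hδ (s ≫ g))
end

section
/- Let C be a regular category and Y an object of C. The following conditions are equivalent: (i) Y is a Mal'tsev object; (ii) every double split epimorphism (f' : D → C, s'), (g' : D → A, t'), (f : A → Y, s), (g : C → Y, t) over Y is a regular pushout, i.e. the comparison morphism ⟨g', f'⟩ : D → A ×_Y C into the pullback of f and g is a regular epimorphism; (iii) every double split epimorphism over Y in which f' and g' are jointly monomorphic is a pullback square. -/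
open CategoryTheory CategoryTheory.Limits

universe v u

variable {C : Type u} [Category.{v} C]

section AuxLemmas

lemma isRegularEpi'_comp_iso {X Y Z : C} {f : X ⟶ Y} (g : Y ⟶ Z) [IsIso g]
    (h : Nonempty (RegularEpi f)) : Nonempty (RegularEpi (f ≫ g)) := by
  obtain ⟨h⟩ := h
  refine ⟨{ W := h.W
            left := h.left
            right := h.right
            w := by rw [← Category.assoc, ← Category.assoc, h.w]
            isColimit := ?_ }⟩
  refine Cofork.IsColimit.mk _
    (fun s => inv g ≫ Cofork.IsColimit.desc h.isColimit s.π s.condition) ?_ ?_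
  · intro s
    simp only [Cofork.π_ofπ, Category.assoc, IsIso.hom_inv_id_assoc]
    exact Cofork.IsColimit.π_desc' h.isColimit s.π _
  · intro s m hm
    have h2 : g ≫ m = Cofork.IsColimit.desc h.isColimit s.π s.condition := by
      apply Cofork.IsColimit.hom_ext h.isColimit
      rw [Cofork.IsColimit.π_desc']
      simpa using hm
    rw [← h2, IsIso.inv_hom_id_assoc]

lemma regular_image_fact [HasFiniteLimits C]
    (hcoeq : ∀ {X Y : C} (f : X ⟶ Y),
      HasCoequalizer (pullback.fst f f) (pullback.snd f f))
    (hstab : ∀ {X Y Z : C} (f : X ⟶ Z) (g : Y ⟶ Z),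
      Nonempty (RegularEpi f) → Nonempty (RegularEpi (pullback.snd f g)))
    {D P : C} (φ : D ⟶ P) :
    ∃ (Q : C) (q : D ⟶ Q) (m : Q ⟶ P),
      Nonempty (RegularEpi q) ∧ Mono m ∧ q ≫ m = φ := by
  haveI := hcoeq φ
  refine ⟨_, coequalizer.π (pullback.fst φ φ) (pullback.snd φ φ),
    coequalizer.desc φ (pullback.condition), ⟨coequalizerRegular _ _⟩, ?_,
    coequalizer.π_desc _ _⟩
  set q := coequalizer.π (pullback.fst φ φ) (pullback.snd φ φ) with hq
  set m := coequalizer.desc φ (pullback.condition) with hm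
  have hqm : q ≫ m = φ := coequalizer.π_desc _ _
  constructor
  intro T a b hab
  have e1epi : Epi (pullback.snd q a) := by
    obtain ⟨i⟩ := hstab q a ⟨coequalizerRegular _ _⟩; haveI := i; exact RegularEpi.epi _ i
  set e1 := pullback.snd q a with he1
  set d1 := pullback.fst q a with hd1
  have e2epi : Epi (pullback.snd q (e1 ≫ b)) := by
    obtain ⟨i⟩ := hstab q (e1 ≫ b) ⟨coequalizerRegular _ _⟩; haveI := i; exact RegularEpi.epi _ i
  set e2 := pullback.snd q (e1 ≫ b) with he2
  set d2 := pullback.fst q (e1 ≫ b) with hd2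
  have c1 : d1 ≫ q = e1 ≫ a := pullback.condition
  have c2 : d2 ≫ q = e2 ≫ (e1 ≫ b) := pullback.condition
  have hxy : (e2 ≫ d1) ≫ φ = d2 ≫ φ := by
    calc (e2 ≫ d1) ≫ φ = (e2 ≫ d1) ≫ q ≫ m := by rw [hqm]
      _ = e2 ≫ (d1 ≫ q) ≫ m := by simp [Category.assoc]
      _ = e2 ≫ (e1 ≫ a) ≫ m := by rw [c1]
      _ = e2 ≫ e1 ≫ b ≫ m := by simp only [Category.assoc, hab]
      _ = (d2 ≫ q) ≫ m := by rw [c2]; simp [Category.assoc]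
      _ = d2 ≫ φ := by rw [Category.assoc, hqm]
  set k := pullback.lift (e2 ≫ d1) d2 hxy with hk
  have h1 : (e2 ≫ d1) ≫ q = d2 ≫ q := by
    have hc := coequalizer.condition (pullback.fst φ φ) (pullback.snd φ φ)
    have h2 := congrArg (fun t => k ≫ t) hc
    simpa [hk, ← hq, pullback.lift_fst, pullback.lift_snd, pullback.lift_fst_assoc, pullback.lift_snd_assoc] using h2
  have h3 : e2 ≫ e1 ≫ a = e2 ≫ e1 ≫ b := by
    rw [← c1]
    rw [Category.assoc] at h1
    rw [h1, c2]
  rw [cancel_epi, cancel_epi] at h3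
  exact h3

lemma mono_pb_to_prod [HasFiniteLimits C] {A B Z : C} (f : A ⟶ Z) (g : B ⟶ Z) :
    Mono (prod.lift (pullback.fst f g) (pullback.snd f g)) := by
  constructor
  intro T u v huv
  apply pullback.hom_ext
  · have := congrArg (fun t => t ≫ (prod.fst : A ⨯ B ⟶ A)) huv
    simpa [prod.lift_fst] using this
  · have := congrArg (fun t => t ≫ (prod.snd : A ⨯ B ⟶ B)) huv
    simpa [prod.lift_snd] using this

end AuxLemmas

/-- In a regular category, TFAE for an object `Y`: (i) `Y` is a Mal'tsev
object; (ii) every double split epimorphism over `Y` is a regular pushout,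
i.e. the comparison morphism into the pullback is a regular epimorphism;
(iii) every double split epimorphism over `Y` whose top morphisms are jointly
monomorphic is a pullback. -/
theorem statement16 [HasFiniteLimits C]
    (hcoeq : ∀ {X Y : C} (f : X ⟶ Y),
      HasCoequalizer (pullback.fst f f) (pullback.snd f f))
    (hstab : ∀ {X Y Z : C} (f : X ⟶ Z) (g : Y ⟶ Z),
      _root_.IsRegularEpi f → _root_.IsRegularEpi (pullback.snd f g))
    (Y : C) :
    List.TFAE [IsMaltsevObject Y,
      ∀ ⦃D A Cc : C⦄
        (f' : D ⟶ Cc) (s' : Cc ⟶ D) (g' : D ⟶ A) (t' : A ⟶ D)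
        (f : A ⟶ Y) (s : Y ⟶ A) (g : Cc ⟶ Y) (t : Y ⟶ Cc),
        s' ≫ f' = 𝟙 Cc → t' ≫ g' = 𝟙 A → s ≫ f = 𝟙 Y → t ≫ g = 𝟙 Y →
        ∀ (c1 : f' ≫ g = g' ≫ f), s' ≫ g' = g ≫ s → t' ≫ f' = f ≫ t →
        t ≫ s' = s ≫ t' →
        _root_.IsRegularEpi (pullback.lift g' f' c1.symm : D ⟶ pullback f g),
      ∀ ⦃D A Cc : C⦄
        (f' : D ⟶ Cc) (s' : Cc ⟶ D) (g' : D ⟶ A) (t' : A ⟶ D)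
        (f : A ⟶ Y) (s : Y ⟶ A) (g : Cc ⟶ Y) (t : Y ⟶ Cc),
        s' ≫ f' = 𝟙 Cc → t' ≫ g' = 𝟙 A → s ≫ f = 𝟙 Y → t ≫ g = 𝟙 Y →
        ∀ (c1 : f' ≫ g = g' ≫ f), s' ≫ g' = g ≫ s → t' ≫ f' = f ≫ t →
        t ≫ s' = s ≫ t' →
        Mono (prod.lift g' f' : D ⟶ A ⨯ Cc) →
        Nonempty (IsLimit (PullbackCone.mk g' f' c1.symm))] := by
  tfae_have 1 → 2
  · intro h1
    intro D A Cc f' s' g' t' f s g t hs' ht' hs ht c1 c2 c3 c4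
    set φ : D ⟶ pullback f g := pullback.lift g' f' c1.symm with hφ
    obtain ⟨Q, q, m, hqre, hmono, hfac⟩ := regular_image_fact hcoeq hstab φ
    have hiso : IsIso m := by
      refine h1 f s g t hs ht m hmono ⟨t' ≫ q, ?_⟩ ⟨s' ≫ q, ?_⟩
      · rw [Category.assoc, hfac]
        apply pullback.hom_ext <;> simp [hφ, ht', c3, pullback.lift_fst, pullback.lift_snd, pullback.lift_fst_assoc, pullback.lift_snd_assoc]
      · rw [Category.assoc, hfac]
        apply pullback.hom_ext <;> simp [hφ, hs', c2, pullback.lift_fst, pullback.lift_snd, pullback.lift_fst_assoc, pullback.lift_snd_assoc]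
    haveI := hiso
    have := isRegularEpi'_comp_iso m hqre
    rw [hfac] at this
    exact this
  tfae_have 2 → 3
  · intro h2
    intro D A Cc f' s' g' t' f s g t hs' ht' hs ht c1 c2 c3 c4 hjm
    have hre := h2 f' s' g' t' f s g t hs' ht' hs ht c1 c2 c3 c4
    set φ : D ⟶ pullback f g := pullback.lift g' f' c1.symm with hφ
    have heq : φ ≫ prod.lift (pullback.fst f g) (pullback.snd f g) =
        prod.lift g' f' := by
      apply Limits.prod.hom_ext <;> simp [hφ, prod.lift_fst, prod.lift_snd, pullback.lift_fst, pullback.lift_snd]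
    haveI : Mono (φ ≫ prod.lift (pullback.fst f g) (pullback.snd f g)) := by
      rw [heq]; exact hjm
    haveI : Mono φ := mono_of_mono φ (prod.lift (pullback.fst f g) (pullback.snd f g))
    haveI : RegularEpi φ := hre.some
    haveI : IsIso φ := isIso_of_regularEpi_of_mono φ hre.some
    have hf : φ ≫ pullback.fst f g = g' := pullback.lift_fst _ _ _
    have hg : φ ≫ pullback.snd f g = f' := pullback.lift_snd _ _ _
    refine ⟨PullbackCone.IsLimit.mk c1.symm
      (fun sc => pullback.lift sc.fst sc.snd sc.condition ≫ inv φ) ?_ ?_ ?_⟩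
    · intro sc
      have : inv φ ≫ g' = pullback.fst f g := by
        rw [IsIso.inv_comp_eq, hf]
      rw [Category.assoc, this, pullback.lift_fst]
    · intro sc
      have : inv φ ≫ f' = pullback.snd f g := by
        rw [IsIso.inv_comp_eq, hg]
      rw [Category.assoc, this, pullback.lift_snd]
    · intro sc mm hm1 hm2
      have : mm ≫ φ = pullback.lift sc.fst sc.snd sc.condition := by
        apply pullback.hom_ext
        · rw [Category.assoc, hf, hm1, pullback.lift_fst]
        · rw [Category.assoc, hg, hm2, pullback.lift_snd]
      show mm = pullback.lift sc.fst sc.snd sc.condition ≫ inv φ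
      rw [← this, Category.assoc, IsIso.hom_inv_id, Category.comp_id]
  tfae_have 3 → 1
  · intro h3
    intro A X f s g t hs ht
    intro M m hmono hr hu
    obtain ⟨r', hr'⟩ := hr
    obtain ⟨u', hu'⟩ := hu
    set g'' : M ⟶ A := m ≫ pullback.fst f g with hg''
    set f'' : M ⟶ X := m ≫ pullback.snd f g with hf''
    have e1 : u' ≫ f'' = 𝟙 X := by
      rw [hf'', ← Category.assoc, hu', pullback.lift_snd]
    have e2 : r' ≫ g'' = 𝟙 A := by
      rw [hg'', ← Category.assoc, hr', pullback.lift_fst]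
    have ec1 : f'' ≫ g = g'' ≫ f := by
      rw [hf'', hg'', Category.assoc, Category.assoc, pullback.condition]
    have ec2 : u' ≫ g'' = g ≫ s := by
      rw [hg'', ← Category.assoc, hu', pullback.lift_fst]
    have ec3 : r' ≫ f'' = f ≫ t := by
      rw [hf'', ← Category.assoc, hr', pullback.lift_snd]
    have ec4 : t ≫ u' = s ≫ r' := by
      rw [← cancel_mono m, Category.assoc, Category.assoc, hu', hr']
      apply pullback.hom_ext <;> simp [reassoc_of% hs, reassoc_of% ht, hs, ht, pullback.lift_fst, pullback.lift_snd, pullback.lift_fst_assoc, pullback.lift_snd_assoc]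
    have hjm : Mono (prod.lift g'' f'' : M ⟶ A ⨯ X) := by
      have : (prod.lift g'' f'' : M ⟶ A ⨯ X) =
          m ≫ prod.lift (pullback.fst f g) (pullback.snd f g) := by
        apply Limits.prod.hom_ext <;> simp [hg'', hf'']
      rw [this]
      haveI := mono_pb_to_prod f g
      exact mono_comp _ _
    obtain ⟨hl⟩ := h3 f'' u' g'' r' f s g t e1 e2 hs ht ec1 ec2 ec3 ec4 hjm
    set ψ := PullbackCone.IsLimit.lift hl (pullback.fst f g) (pullback.snd f g)
      pullback.condition with hψ
    have hψ1 : ψ ≫ g'' = pullback.fst f g :=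
      PullbackCone.IsLimit.lift_fst hl _ _ _
    have hψ2 : ψ ≫ f'' = pullback.snd f g :=
      PullbackCone.IsLimit.lift_snd hl _ _ _
    have hψm : ψ ≫ m = 𝟙 _ := by
      apply pullback.hom_ext
      · exact (Category.assoc _ _ _).trans (hψ1.trans (Category.id_comp _).symm)
      · exact (Category.assoc _ _ _).trans (hψ2.trans (Category.id_comp _).symm)
    refine ⟨ψ, ?_, hψm⟩
    rw [← cancel_mono m]
    exact (Category.assoc _ _ _).trans ((congrArg (m ≫ ·) hψm).trans ((Category.comp_id m).trans (Category.id_comp m).symm))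
  tfae_finish
end

section
/- In a pointed regular category, every Mal'tsev object is a strongly unital object. -/
open CategoryTheory CategoryTheory.Limits

universe v u

variable {C : Type u} [Category.{v} C]

/-- In a pointed regular category, every Mal'tsev object is a strongly unital
object. -/
theorem statement17 [HasFiniteLimits C] [HasZeroObject C] [HasZeroMorphisms C]
    (hcoeq : ∀ {X Y : C} (f : X ⟶ Y),
      HasCoequalizer (pullback.fst f f) (pullback.snd f f))
    (hstab : ∀ {X Y Z : C} (f : X ⟶ Z) (g : Y ⟶ Z),
      _root_.IsRegularEpi f → _root_.IsRegularEpi (pullback.snd f g))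
    (Y : C) (h : IsMaltsevObject Y) : StronglyUnitalObject Y := by
  intro X g W hw M m hm hfac1 hfac2
  obtain ⟨a, ha⟩ := hfac1
  obtain ⟨b, hb⟩ := hfac2
  haveI : Mono m := hm
  -- the "zero section" ω of the pulled-back point, and its factorization u through m
  obtain ⟨ω, hω1, hω2⟩ :
      ∃ ω : Y ⟶ pullback g (prod.fst : Y ⨯ Y ⟶ Y),
        ω ≫ pullback.fst g prod.fst = 0 ∧
          ω ≫ pullback.snd g prod.fst = prod.lift 0 (𝟙 Y) :=
    ⟨pullback.lift 0 (prod.lift 0 (𝟙 Y)) (by simp; rw [prod.lift_fst]),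
      pullback.lift_fst _ _ _, pullback.lift_snd _ _ _⟩
  obtain ⟨u, hum⟩ : ∃ u : Y ⟶ M, u ≫ m = ω :=
    ⟨pullback.lift 0 ω (by simp [hω1]) ≫ a,
      by rw [Category.assoc, ha, pullback.lift_snd]⟩
  -- basic equations
  have hbρ : b ≫ m ≫ pullback.fst g prod.fst = 𝟙 X := by
    rw [← Category.assoc, hb, pullback.lift_fst]
  have hbsnd : b ≫ m ≫ pullback.snd g prod.fst = g ≫ prod.lift (𝟙 Y) (𝟙 Y) := by
    rw [← Category.assoc, hb, pullback.lift_snd]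
  have hbφ : b ≫ m ≫ pullback.snd g prod.fst ≫ prod.snd = g := by
    rw [reassoc_of% hbsnd, prod.lift_snd, Category.comp_id]
  have huρ : u ≫ m ≫ pullback.fst g prod.fst = 0 := by
    rw [← Category.assoc, hum, hω1]
  have huφ : u ≫ m ≫ pullback.snd g prod.fst ≫ prod.snd = 𝟙 Y := by
    rw [reassoc_of% hum, reassoc_of% hω2, prod.lift_snd]
  have huY : u ≫ m ≫ pullback.snd g prod.fst ≫ prod.fst = 0 := by
    rw [reassoc_of% hum, reassoc_of% hω2, prod.lift_fst]
  -- Mal'tsev property applied to the split epis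
  -- m ≫ pullback.snd ≫ prod.snd : M ⟶ Y (with section u) and prod.fst : Y ⨯ Y ⟶ Y
  have key := h (m ≫ pullback.snd g prod.fst ≫ prod.snd) u (prod.fst : Y ⨯ Y ⟶ Y)
    (prod.lift (𝟙 Y) (𝟙 Y)) huφ (by rw [prod.lift_fst])
  -- comparison morphism χ from the Mal'tsev pullback to the ambient pullback
  obtain ⟨χ, hχ1, hχ2, hχ3⟩ :
      ∃ χ : pullback (m ≫ pullback.snd g prod.fst ≫ prod.snd)
            (prod.fst : Y ⨯ Y ⟶ Y) ⟶ pullback g (prod.fst : Y ⨯ Y ⟶ Y),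
        χ ≫ pullback.fst g prod.fst =
            pullback.fst (m ≫ pullback.snd g prod.fst ≫ prod.snd) prod.fst ≫
              m ≫ pullback.fst g prod.fst ∧
          χ ≫ pullback.snd g prod.fst ≫ prod.fst =
            pullback.fst (m ≫ pullback.snd g prod.fst ≫ prod.snd) prod.fst ≫
              m ≫ pullback.fst g prod.fst ≫ g ∧
          χ ≫ pullback.snd g prod.fst ≫ prod.snd =
            pullback.snd (m ≫ pullback.snd g prod.fst ≫ prod.snd) prod.fst ≫
              prod.snd := by
    refine ⟨pullback.lift
      (pullback.fst (m ≫ pullback.snd g prod.fst ≫ prod.snd) prod.fst ≫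
        m ≫ pullback.fst g prod.fst)
      (prod.lift
        (pullback.fst (m ≫ pullback.snd g prod.fst ≫ prod.snd) prod.fst ≫
          m ≫ pullback.fst g prod.fst ≫ g)
        (pullback.snd (m ≫ pullback.snd g prod.fst ≫ prod.snd) prod.fst ≫
          prod.snd)) (by simp; rw [prod.lift_fst]), pullback.lift_fst _ _ _, ?_, ?_⟩
    · rw [pullback.lift_snd_assoc, prod.lift_fst]
    · rw [pullback.lift_snd_assoc, prod.lift_snd]
  -- the first Mal'tsev section composed with χ is m
  have hrχ : (pullback.lift (𝟙 M)
      ((m ≫ pullback.snd g prod.fst ≫ prod.snd) ≫ prod.lift (𝟙 Y) (𝟙 Y)) (by simp; rw [prod.lift_fst]) :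
      M ⟶ pullback (m ≫ pullback.snd g prod.fst ≫ prod.snd) prod.fst) ≫ χ = m := by
    apply pullback.hom_ext
    · simp only [Category.assoc, hχ1, pullback.lift_fst_assoc, Category.id_comp]
    · apply Limits.prod.hom_ext
      · simp only [Category.assoc, hχ2, pullback.lift_fst_assoc, Category.id_comp,
          pullback.condition]
      · simp only [Category.assoc, hχ3, pullback.lift_snd_assoc, prod.lift_snd,
          Category.comp_id]
  -- the second Mal'tsev section composed with χ factors through m
  have hsχ : (pullback.lift ((prod.fst : Y ⨯ Y ⟶ Y) ≫ u) (𝟙 (Y ⨯ Y)) (by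
        simp only [Category.assoc, huφ, Category.comp_id, Category.id_comp]) :
      Y ⨯ Y ⟶ pullback (m ≫ pullback.snd g prod.fst ≫ prod.snd) prod.fst) ≫ χ =
      (prod.snd ≫ u) ≫ m := by
    apply pullback.hom_ext
    · simp only [Category.assoc, hχ1, pullback.lift_fst_assoc, huρ, comp_zero]
    · apply Limits.prod.hom_ext
      · simp only [Category.assoc, hχ2, pullback.lift_fst_assoc, huY,
          reassoc_of% huρ, zero_comp, comp_zero]
      · simp only [Category.assoc, hχ3, pullback.lift_snd_assoc, Category.id_comp,
          huφ, Category.comp_id]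
  -- a section σ of χ
  obtain ⟨σ, hσ1, hσ2⟩ :
      ∃ σ : pullback g (prod.fst : Y ⨯ Y ⟶ Y) ⟶
          pullback (m ≫ pullback.snd g prod.fst ≫ prod.snd) (prod.fst : Y ⨯ Y ⟶ Y),
        σ ≫ pullback.fst (m ≫ pullback.snd g prod.fst ≫ prod.snd) prod.fst =
            pullback.fst g prod.fst ≫ b ∧
          σ ≫ pullback.snd (m ≫ pullback.snd g prod.fst ≫ prod.snd) prod.fst =
            prod.lift (pullback.fst g prod.fst ≫ g)
              (pullback.snd g prod.fst ≫ prod.snd) :=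
    ⟨pullback.lift (pullback.fst g prod.fst ≫ b)
      (prod.lift (pullback.fst g prod.fst ≫ g) (pullback.snd g prod.fst ≫ prod.snd))
      (by rw [Category.assoc, hbφ, prod.lift_fst]),
      pullback.lift_fst _ _ _, pullback.lift_snd _ _ _⟩
  have hσχ : σ ≫ χ = 𝟙 (pullback g (prod.fst : Y ⨯ Y ⟶ Y)) := by
    apply pullback.hom_ext
    · simp only [Category.assoc, hχ1, reassoc_of% hσ1, hbρ, Category.comp_id,
        Category.id_comp]
    · apply Limits.prod.hom_ext
      · simp only [Category.assoc, hχ2, reassoc_of% hσ1, reassoc_of% hbρ,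
          reassoc_of% hbsnd, prod.lift_fst, Category.comp_id,
          Category.id_comp, pullback.condition]
      · simp only [Category.assoc, hχ3, reassoc_of% hσ2, prod.lift_snd,
          Category.id_comp]
  -- joint strong epicness applied to the pullback of m along χ
  have hiso : IsIso (pullback.fst χ m) := by
    refine key (pullback.fst χ m) inferInstance
      ⟨pullback.lift _ (𝟙 M) (by rw [Category.id_comp]; exact hrχ),
        pullback.lift_fst _ _ _⟩
      ⟨pullback.lift _ (prod.snd ≫ u) (by exact hsχ), pullback.lift_fst _ _ _⟩
  -- conclude: m is a split epi, hence an iso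
  have hwm : (σ ≫ inv (pullback.fst χ m) ≫ pullback.snd χ m) ≫ m =
      𝟙 (pullback g (prod.fst : Y ⨯ Y ⟶ Y)) := by
    rw [Category.assoc, Category.assoc, ← pullback.condition,
      ← Category.assoc (inv (pullback.fst χ m)), IsIso.inv_hom_id,
      Category.id_comp, hσχ]
  exact ⟨⟨σ ≫ inv (pullback.fst χ m) ≫ pullback.snd χ m,
    by rw [← cancel_mono m, Category.assoc, hwm, Category.comp_id, Category.id_comp],
    hwm⟩⟩
end

section
/- In a pointed finitely complete category C, the zero object is a Mal'tsev object if and only if C is a unital category. -/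
open CategoryTheory CategoryTheory.Limits

universe v u

variable {C : Type u} [Category.{v} C]

lemma jse_comp_iso {X Y A B : C} (r : X ⟶ A) (s : Y ⟶ A) (e : A ≅ B)
    (h : JointlyStronglyEpi r s) :
    JointlyStronglyEpi (r ≫ e.hom) (s ≫ e.hom) := by
  rintro M m hm ⟨r', hr'⟩ ⟨s', hs'⟩
  have hmono : Mono (m ≫ e.inv) := mono_comp _ _
  have : IsIso (m ≫ e.inv) := by
    refine h (m ≫ e.inv) hmono ⟨r', ?_⟩ ⟨s', ?_⟩
    · rw [← Category.assoc, hr', Category.assoc, e.hom_inv_id, Category.comp_id]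
    · rw [← Category.assoc, hs', Category.assoc, e.hom_inv_id, Category.comp_id]
  have : IsIso ((m ≫ e.inv) ≫ e.hom) := inferInstance
  simpa using this

open ZeroObject in
/-- The pullback over the zero object is the product. -/
noncomputable def pullbackZeroIso [HasFiniteLimits C] [HasZeroObject C]
    [HasZeroMorphisms C] {A X : C} (f : A ⟶ (0 : C)) (g : X ⟶ (0 : C)) :
    pullback f g ≅ A ⨯ X where
  hom := prod.lift (pullback.fst f g) (pullback.snd f g)
  inv := pullback.lift prod.fst prod.snd ((isZero_zero C).eq_of_tgt _ _)
  hom_inv_id := by apply pullback.hom_ext <;> simp [prod.lift_fst, prod.lift_snd, pullback.lift_fst, pullback.lift_snd]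
  inv_hom_id := by apply Limits.prod.hom_ext <;> simp [prod.lift_fst, prod.lift_snd, pullback.lift_fst, pullback.lift_snd]

open ZeroObject in
/-- In a pointed finitely complete category `C`, the zero object is a Mal'tsev
object iff `C` is a unital category. -/
theorem statement18 [HasFiniteLimits C] [HasZeroObject C] [HasZeroMorphisms C] :
    IsMaltsevObject (0 : C) ↔
      ∀ (X Y : C),
        JointlyStronglyEpi (prod.lift (𝟙 X) (0 : X ⟶ Y))
          (prod.lift (0 : Y ⟶ X) (𝟙 Y)) := by
  constructor
  · intro h X Y
    have hs : ((0 : (0 : C) ⟶ X) ≫ (0 : X ⟶ (0 : C))) = 𝟙 _ := by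
      apply (isZero_zero C).eq_of_tgt
    have ht : ((0 : (0 : C) ⟶ Y) ≫ (0 : Y ⟶ (0 : C))) = 𝟙 _ := by
      apply (isZero_zero C).eq_of_tgt
    have key := h (0 : X ⟶ (0 : C)) (0 : (0 : C) ⟶ X) (0 : Y ⟶ (0 : C))
      (0 : (0 : C) ⟶ Y) hs ht
    have key2 := jse_comp_iso _ _ (pullbackZeroIso (0 : X ⟶ (0 : C)) (0 : Y ⟶ (0 : C))) key
    have e1 : (pullback.lift (𝟙 X) ((0 : X ⟶ (0:C)) ≫ (0 : (0:C) ⟶ Y)) ((isZero_zero C).eq_of_tgt _ _) :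
        X ⟶ pullback (0 : X ⟶ (0:C)) (0 : Y ⟶ (0:C))) ≫
        (pullbackZeroIso (0 : X ⟶ (0 : C)) (0 : Y ⟶ (0 : C))).hom =
        prod.lift (𝟙 X) (0 : X ⟶ Y) := by
      apply Limits.prod.hom_ext <;> simp [pullbackZeroIso, prod.lift_fst, prod.lift_snd, pullback.lift_fst, pullback.lift_snd]
    have e2 : (pullback.lift ((0 : Y ⟶ (0:C)) ≫ (0 : (0:C) ⟶ X)) (𝟙 Y) ((isZero_zero C).eq_of_tgt _ _) :
        Y ⟶ pullback (0 : X ⟶ (0:C)) (0 : Y ⟶ (0:C))) ≫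
        (pullbackZeroIso (0 : X ⟶ (0 : C)) (0 : Y ⟶ (0 : C))).hom =
        prod.lift (0 : Y ⟶ X) (𝟙 Y) := by
      apply Limits.prod.hom_ext <;> simp [pullbackZeroIso, prod.lift_fst, prod.lift_snd, pullback.lift_fst, pullback.lift_snd]
    rwa [e1, e2] at key2
  · intro h A X f s g t hs ht
    have hf : f = 0 := (isZero_zero C).eq_of_tgt f 0
    have hg : g = 0 := (isZero_zero C).eq_of_tgt g 0
    have key := h A X
    have key2 := jse_comp_iso _ _ (pullbackZeroIso f g).symm key
    have e1 : (prod.lift (𝟙 A) (0 : A ⟶ X)) ≫ (pullbackZeroIso f g).symm.hom =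
        pullback.lift (𝟙 A) (f ≫ t) ((isZero_zero C).eq_of_tgt _ _) := by
      apply pullback.hom_ext <;>
        simp [pullbackZeroIso, hf, hg, zero_comp, prod.lift_fst, prod.lift_snd, pullback.lift_fst, pullback.lift_snd]
    have e2 : (prod.lift (0 : X ⟶ A) (𝟙 X)) ≫ (pullbackZeroIso f g).symm.hom =
        pullback.lift (g ≫ s) (𝟙 X) ((isZero_zero C).eq_of_tgt _ _) := by
      apply pullback.hom_ext <;>
        simp [pullbackZeroIso, hf, hg, zero_comp, prod.lift_fst, prod.lift_snd, pullback.lift_fst, pullback.lift_snd]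
    rwa [e1, e2] at key2
end
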